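/- arXiv:1108.6185 — 8 statements merged into one kernel-verified Lean document; each statement's English description precedes it below -/
import Mathlib

section
/- The vectors ev_S(X_1^{i_1}···X_m^{i_m}) for 0 ≤ i_j < |S_j| (j = 1,...,m) form a basis of F_q^n as a vector space over F_q, where n = |S_1|···|S_m|. -/
open MvPolynomial

/-- Finsupps on `Fin m` bounded by `c` are equivalent to `∀ i, Fin (c i)`. -/
noncomputable def boundedFinsuppEquiv {m : ℕ} (c : Fin m → ℕ) :
    {d : Fin m →₀ ℕ // ∀ i, d i < c i} ≃ (∀ i, Fin (c i)) where
  toFun d i := ⟨d.1 i, d.2 i⟩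
  invFun f := ⟨Finsupp.equivFunOnFinite.symm fun i => (f i : ℕ),
    fun i => by simp⟩
  left_inv d := by
    ext i
    simp
  right_inv f := by
    ext i
    simp

lemma degreeOf_aeval_X_le {m : ℕ} {K : Type*} [Field K] (q : Polynomial K) (i j : Fin m) :
    degreeOf i (Polynomial.aeval (X j : MvPolynomial (Fin m) K) q) ≤
      if i = j then q.natDegree else 0 := by
  rw [Polynomial.aeval_def, Polynomial.eval₂_eq_sum_range]
  refine le_trans (degreeOf_sum_le _ _ _) (Finset.sup_le fun k hk => ?_)
  refine le_trans (degreeOf_mul_le _ _ _) ?_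
  have hC : degreeOf i ((algebraMap K (MvPolynomial (Fin m) K)) (q.coeff k)) = 0 := by
    rw [MvPolynomial.algebraMap_eq, degreeOf_C]
  rw [hC, zero_add]
  refine le_trans (degreeOf_pow_le _ _ _) ?_
  rw [degreeOf_X]
  by_cases h : i = j
  · simp only [h, if_true, mul_one]
    exact Nat.lt_succ_iff.mp (Finset.mem_range.mp hk)
  · simp [h]

/-- The vectors `ev_S(X_1^{i_1}⋯X_m^{i_m})` for `0 ≤ i_j < |S_j|` form a
basis of `F_q^n` (identified with the functions on the grid `S_1 × ⋯ × S_m`). -/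
theorem monomial_evaluations_basis {m : ℕ} {K : Type*} [Field K] [Fintype K]
    (S : Fin m → Finset K) (hS : ∀ i, (S i).Nonempty) :
    ∃ B : Module.Basis {d : Fin m →₀ ℕ // ∀ i, d i < (S i).card} K
        ({a // a ∈ Fintype.piFinset S} → K),
      ∀ d, B d = fun a => MvPolynomial.eval a.1 (MvPolynomial.monomial d.1 (1 : K)) := by
  classical
  have hc0 : ∀ i, 0 < (S i).card := fun i => Finset.card_pos.mpr (hS i)
  set ι := {a // a ∈ Fintype.piFinset S}
  set I := {d : Fin m →₀ ℕ // ∀ i, d i < (S i).card}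
  haveI : Fintype I := Fintype.ofEquiv _ (boundedFinsuppEquiv fun i => (S i).card).symm
  -- the evaluation linear map
  set ev : MvPolynomial (Fin m) K →ₗ[K] (ι → K) :=
    LinearMap.pi (fun a : ι => (MvPolynomial.aeval a.1).toLinearMap) with hev
  have hev_apply : ∀ (p : MvPolynomial (Fin m) K) (a : ι),
      ev p a = MvPolynomial.eval a.1 p := fun p a => rfl
  set v : I → (ι → K) :=
    fun d => fun a => MvPolynomial.eval a.1 (MvPolynomial.monomial d.1 (1 : K)) with hv
  have hvev : ∀ d : I, v d = ev (MvPolynomial.monomial d.1 (1 : K)) := fun d => rfl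
  have hmem : ∀ (a : ι) (j : Fin m), a.1 j ∈ S j := fun a j =>
    (Fintype.mem_piFinset.mp a.2) j
  -- the grid indicator polynomials
  set P : ι → MvPolynomial (Fin m) K := fun a =>
    ∏ j : Fin m, Polynomial.aeval (X j : MvPolynomial (Fin m) K)
      (Lagrange.basis (S j) id (a.1 j)) with hP
  -- evaluation of P a at grid points
  have hPeval : ∀ a b : ι, ev (P a) b = if b = a then 1 else 0 := by
    intro a b
    have key : ev (P a) b =
        ∏ j : Fin m, Polynomial.eval (b.1 j) (Lagrange.basis (S j) id (a.1 j)) := by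
      rw [hev_apply, hP]
      rw [map_prod]
      refine Finset.prod_congr rfl fun j _ => ?_
      rw [Polynomial.aeval_def, Polynomial.hom_eval₂, MvPolynomial.eval_X]
      have hid : (MvPolynomial.eval b.1).comp (algebraMap K (MvPolynomial (Fin m) K))
          = RingHom.id K := by
        ext r; simp [MvPolynomial.algebraMap_eq]
      rw [hid]
      rfl
    rw [key]
    by_cases hba : b = a
    · subst hba
      rw [if_pos rfl]
      refine Finset.prod_eq_one fun j _ => ?_
      exact Lagrange.eval_basis_self (Set.injOn_id _) (hmem b j)
    · rw [if_neg hba]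
      have : ∃ j, b.1 j ≠ a.1 j := by
        by_contra h
        push_neg at h
        exact hba (Subtype.ext (funext h))
      obtain ⟨j, hj⟩ := this
      refine Finset.prod_eq_zero (Finset.mem_univ j) ?_
      have := Lagrange.eval_basis_of_ne (v := id) (s := S j)
        (i := a.1 j) (j := b.1 j) (Ne.symm hj) (hmem b j)
      simpa using this
  -- degree bounds for P a
  have hPdeg : ∀ (a : ι) (i : Fin m), degreeOf i (P a) < (S i).card := by
    intro a i
    have h1 : degreeOf i (P a) ≤ ∑ j : Fin m,
        degreeOf i (Polynomial.aeval (X j : MvPolynomial (Fin m) K)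
          (Lagrange.basis (S j) id (a.1 j))) := degreeOf_prod_le _ _ _
    have h2 : ∀ j : Fin m,
        degreeOf i (Polynomial.aeval (X j : MvPolynomial (Fin m) K)
          (Lagrange.basis (S j) id (a.1 j))) ≤
        if i = j then (S i).card - 1 else 0 := by
      intro j
      refine le_trans (degreeOf_aeval_X_le _ i j) ?_
      by_cases h : i = j
      · subst h
        simp only [if_true]
        rw [Lagrange.natDegree_basis (Set.injOn_id _) (hmem a i)]
      · simp [h]
    calc degreeOf i (P a) ≤ ∑ j : Fin m, if i = j then (S i).card - 1 else 0 :=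
          le_trans h1 (Finset.sum_le_sum fun j _ => h2 j)
      _ = (S i).card - 1 := by rw [Finset.sum_ite_eq (Finset.univ) i fun _ => (S i).card - 1]; simp
      _ < (S i).card := Nat.sub_lt (hc0 i) one_pos
  -- P a lies in the span of the bounded monomials
  have hPmem : ∀ a : ι, P a ∈ Submodule.span K
      (Set.range fun d : I => (MvPolynomial.monomial d.1 (1 : K) : MvPolynomial (Fin m) K)) := by
    intro a
    rw [(P a).as_sum]
    refine Submodule.sum_mem _ fun d hd => ?_
    have hdc : ∀ i, d i < (S i).card := fun i =>
      lt_of_le_of_lt (monomial_le_degreeOf i hd) (hPdeg a i)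
    have : (MvPolynomial.monomial d) (coeff d (P a)) =
        coeff d (P a) • (MvPolynomial.monomial d) (1 : K) := by
      rw [MvPolynomial.smul_monomial, smul_eq_mul, mul_one]
    rw [this]
    exact Submodule.smul_mem _ _ (Submodule.subset_span ⟨⟨d, hdc⟩, rfl⟩)
  -- spanning
  have hspan : ⊤ ≤ Submodule.span K (Set.range v) := by
    rw [← (Pi.basisFun K ι).span_eq, Submodule.span_le]
    rintro _ ⟨a, rfl⟩
    rw [Pi.basisFun_apply]
    have h1 : Pi.single a (1 : K) = ev (P a) := by
      funext b
      rw [hPeval a b, Pi.single_apply]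
    rw [h1]
    have h2 : ev (P a) ∈ Submodule.map ev (Submodule.span K
        (Set.range fun d : I => (MvPolynomial.monomial d.1 (1 : K) : MvPolynomial (Fin m) K))) :=
      Submodule.mem_map_of_mem (hPmem a)
    rw [Submodule.map_span, ← Set.range_comp] at h2
    have h3 : (ev ∘ fun d : I => (MvPolynomial.monomial d.1 (1 : K) : MvPolynomial (Fin m) K))
        = v := by
      funext d
      rw [Function.comp_apply, hvev d]
    rwa [h3] at h2
  -- cardinality
  have hcard : Fintype.card I = Module.finrank K (ι → K) := by
    rw [Module.finrank_fintype_fun_eq_card]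
    rw [Fintype.card_congr (boundedFinsuppEquiv fun i => (S i).card)]
    rw [Fintype.card_pi]
    simp only [Fintype.card_fin]
    rw [show Fintype.card ι = (Fintype.piFinset S).card from Fintype.card_coe _,
      Fintype.card_piFinset]
  exact ⟨basisOfTopLeSpanOfCardEqFinrank v hspan hcard,
    fun d => by rw [coe_basisOfTopLeSpanOfCardEqFinrank]⟩
end

section
/- (Schwartz–Zippel for grids, lexicographic version) Let F be a field, and let F(X_1,...,X_m) be a nonzero polynomial whose leading monomial with respect to a lexicographic ordering is X_1^{i_1}···X_m^{i_m}. Then the number of zeros of F in S_1 × ... × S_m is at most i_1 s_2···s_m + s_1 i_2 s_3···s_m + ... + s_1···s_{m-1} i_m, where s_j = |S_j|. -/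
open Finset Classical

lemma lex_apply_zero_le {n : ℕ} {e I : Fin (n + 1) →₀ ℕ}
    (h : toLex e ≤ toLex I) : e 0 ≤ I 0 := by
  rcases (le_iff_eq_or_lt.mp h).imp_right Finsupp.Lex.lt_iff.mp with heq | ⟨i, hj, hi⟩
  · have : e = I := toLex.injective heq
    exact le_of_eq (congrFun (congrArg _ this) 0)
  · rcases eq_or_ne i 0 with rfl | h0
    · exact le_of_lt hi
    · exact le_of_eq (hj 0 (Fin.pos_iff_ne_zero.mpr h0))

lemma lex_cons_le_cons {n d : ℕ} {e t : Fin n →₀ ℕ}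
    (h : toLex (Finsupp.cons d e) ≤ toLex (Finsupp.cons d t)) : toLex e ≤ toLex t := by
  by_contra hc
  push_neg at hc
  have hlt : toLex (Finsupp.cons d t) < toLex (Finsupp.cons d e) := by
    obtain ⟨i, hj, hi⟩ := Finsupp.Lex.lt_iff.mp hc
    refine Finsupp.Lex.lt_iff.mpr ⟨Fin.succ i, ?_, ?_⟩
    · intro j hji
      rcases Fin.eq_zero_or_eq_succ j with rfl | ⟨j', rfl⟩
      · show (Finsupp.cons d t) 0 = (Finsupp.cons d e) 0
        simp [Finsupp.cons_zero]
      · have : j' < i := Fin.succ_lt_succ_iff.mp hji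
        show (Finsupp.cons d t) j'.succ = (Finsupp.cons d e) j'.succ
        simpa [Finsupp.cons_succ] using hj j' this
    · show (Finsupp.cons d t) i.succ < (Finsupp.cons d e) i.succ
      simpa [Finsupp.cons_succ] using hi
  exact absurd h (not_le.mpr hlt)

lemma prod_erase_eq_prod_ite {β : Type*} [CommMonoid β] {n : ℕ} (f : Fin n → β) (j : Fin n) :
    ∏ k ∈ Finset.univ.erase j, f k = ∏ k, if k = j then 1 else f k := by
  rw [← Finset.mul_prod_erase Finset.univ (fun k => if k = j then 1 else f k)
    (Finset.mem_univ j)]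
  rw [if_pos rfl, one_mul]
  refine Finset.prod_congr rfl fun k hk => ?_
  rw [if_neg (Finset.ne_of_mem_erase hk)]

set_option maxHeartbeats 400000 in

/-- Schwartz–Zippel for grids, lexicographic version: if the leading
monomial of a nonzero polynomial `F` with respect to the lexicographic ordering
(`X_1 ≻ X_2 ≻ ⋯ ≻ X_m`) is `X_1^{i_1}⋯X_m^{i_m}`, then the number of zeros of `F` in
`S_1 × ⋯ × S_m` is at most `i_1 s_2⋯s_m + s_1 i_2 s_3⋯s_m + ⋯ + s_1⋯s_{m-1} i_m`. -/
theorem schwartz_zippel_lex {m : ℕ} {K : Type*} [Field K]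
    (S : Fin m → Finset K) (F : MvPolynomial (Fin m) K) (I : Fin m →₀ ℕ)
    (hcoeff : F.coeff I ≠ 0)
    (hlead : ∀ d ∈ F.support, toLex d ≤ toLex I) :
    ((Fintype.piFinset S).filter (fun a => MvPolynomial.eval a F = 0)).card
      ≤ ∑ j : Fin m, I j * ∏ k ∈ Finset.univ.erase j, (S k).card := by
  induction m with
  | zero =>
    have hI : I = 0 := Subsingleton.elim _ _
    have hne : ∀ a : Fin 0 → K, MvPolynomial.eval a F ≠ 0 := by
      intro a
      rw [MvPolynomial.eval_eq]
      have hsupp : F.support = {0} := by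
        refine Finset.eq_singleton_iff_unique_mem.mpr ⟨?_, fun d _ => Subsingleton.elim _ _⟩
        rw [MvPolynomial.mem_support_iff]
        rw [hI] at hcoeff
        exact hcoeff
      rw [hsupp, Finset.sum_singleton]
      simpa using hI ▸ hcoeff
    have : (Fintype.piFinset S).filter (fun a => MvPolynomial.eval a F = 0) = ∅ :=
      Finset.filter_eq_empty_iff.mpr fun a _ => hne a
    rw [this]
    simp
  | succ n ih =>
    set i0 := I 0 with hi0
    set It : Fin n →₀ ℕ := I.tail with hIt
    set F' := MvPolynomial.finSuccEquiv K n F with hF'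
    set G := F'.coeff i0 with hG
    have hGcoeff : G.coeff It ≠ 0 := by
      rw [hG, MvPolynomial.finSuccEquiv_coeff_coeff, hIt, hi0, Finsupp.cons_tail]
      exact hcoeff
    have hGlead : ∀ e ∈ G.support, toLex e ≤ toLex It := by
      intro e he
      have h1 : Finsupp.cons i0 e ∈ F.support :=
        MvPolynomial.mem_support_coeff_finSuccEquiv.mp he
      have h2 : toLex (Finsupp.cons i0 e) ≤ toLex (Finsupp.cons i0 It) := by
        rw [hIt, hi0, Finsupp.cons_tail]
        exact hlead _ h1
      exact lex_cons_le_cons h2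
    have hdeg : F'.natDegree ≤ i0 := by
      rw [hF', MvPolynomial.natDegree_finSuccEquiv, MvPolynomial.degreeOf_eq_sup]
      exact Finset.sup_le fun e he => lex_apply_zero_le (hlead e he)
    set S' : Fin n → Finset K := fun j => S j.succ with hS'
    set T := Fintype.piFinset S' with hT
    set Z := (Fintype.piFinset S).filter (fun a => MvPolynomial.eval a F = 0) with hZ
    set ZA := (Fintype.piFinset S).filter
      (fun a => MvPolynomial.eval a F = 0 ∧ MvPolynomial.eval (Fin.tail a) G ≠ 0) with hZA
    set ZB := (Fintype.piFinset S).filter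
      (fun a => MvPolynomial.eval (Fin.tail a) G = 0) with hZB
    have hsub : Z ⊆ ZA ∪ ZB := by
      intro a ha
      rw [hZ, Finset.mem_filter] at ha
      by_cases hcase : MvPolynomial.eval (Fin.tail a) G = 0
      · exact Finset.mem_union_right _ (Finset.mem_filter.mpr ⟨ha.1, hcase⟩)
      · exact Finset.mem_union_left _ (Finset.mem_filter.mpr ⟨ha.1, ha.2, hcase⟩)
    have evalF : ∀ a : Fin (n + 1) → K,
        MvPolynomial.eval a F =
          Polynomial.eval (a 0) (F'.map (MvPolynomial.eval (Fin.tail a))) := by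
      intro a
      have h1 := MvPolynomial.eval_eq_eval_mv_eval' (Fin.tail a) (a 0) F
      rwa [Fin.cons_self_tail] at h1
    -- bound on ZA
    have hA : ZA.card ≤ i0 * ∏ j : Fin n, (S' j).card := by
      have hmap : ∀ a ∈ ZA, Fin.tail a ∈ T := by
        intro a ha
        rw [hZA, Finset.mem_filter] at ha
        rw [hT, Fintype.mem_piFinset]
        intro j
        exact Fintype.mem_piFinset.mp ha.1 j.succ
      rw [Finset.card_eq_sum_card_fiberwise hmap]
      have hfiber : ∀ t ∈ T, (ZA.filter fun a => Fin.tail a = t).card ≤ i0 := by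
        intro t _
        by_cases hne : (ZA.filter fun a => Fin.tail a = t).Nonempty
        · obtain ⟨a0, ha0⟩ := hne
          rw [Finset.mem_filter, hZA, Finset.mem_filter] at ha0
          set p : Polynomial K := F'.map (MvPolynomial.eval t) with hp
          have hpne : p ≠ 0 := by
            intro h0
            have hc : p.coeff i0 = MvPolynomial.eval t G := by
              rw [hp, Polynomial.coeff_map, hG]
            rw [h0, Polynomial.coeff_zero] at hc
            rw [← ha0.2] at hc
            exact ha0.1.2.2 hc.symm
          have hinj : Set.InjOn (fun a : Fin (n + 1) → K => a 0)
              ↑(ZA.filter fun a => Fin.tail a = t) := by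
            intro a ha b hb hab
            rw [Finset.mem_coe, Finset.mem_filter] at ha hb
            rw [← Fin.cons_self_tail a, ← Fin.cons_self_tail b, ha.2, hb.2]
            simp only at hab
            rw [hab]
          have hmaps : ∀ a ∈ (ZA.filter fun a => Fin.tail a = t),
              a 0 ∈ p.roots.toFinset := by
            intro a ha
            rw [Finset.mem_filter, hZA, Finset.mem_filter] at ha
            have heval : Polynomial.eval (a 0) p = 0 := by
              rw [hp, ← ha.2]
              rw [← evalF a]
              exact ha.1.2.1
            rw [Multiset.mem_toFinset, Polynomial.mem_roots hpne]
            exact heval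
          calc (ZA.filter fun a => Fin.tail a = t).card
              ≤ p.roots.toFinset.card := Finset.card_le_card_of_injOn _ hmaps hinj
            _ ≤ Multiset.card p.roots := Multiset.toFinset_card_le _
            _ ≤ p.natDegree := Polynomial.card_roots' p
            _ ≤ F'.natDegree := Polynomial.natDegree_map_le
            _ ≤ i0 := hdeg
        · rw [Finset.not_nonempty_iff_eq_empty] at hne
          simp [hne]
      calc ∑ t ∈ T, (ZA.filter fun a => Fin.tail a = t).card
          ≤ ∑ _t ∈ T, i0 := Finset.sum_le_sum hfiber
        _ = T.card * i0 := by rw [Finset.sum_const, smul_eq_mul]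
        _ = i0 * ∏ j : Fin n, (S' j).card := by
            rw [hT, Fintype.card_piFinset, Nat.mul_comm]
    -- bound on ZB
    have hB : ZB.card ≤ (S 0).card *
        ∑ j : Fin n, It j * ∏ k ∈ Finset.univ.erase j, (S' k).card := by
      have hinj : Set.InjOn (fun a : Fin (n + 1) → K => (a 0, Fin.tail a)) ↑ZB := by
        intro a _ b _ hab
        simp only [Prod.mk.injEq] at hab
        rw [← Fin.cons_self_tail a, ← Fin.cons_self_tail b, hab.1, hab.2]
      have hmaps : ∀ a ∈ ZB, (a 0, Fin.tail a) ∈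
          (S 0) ×ˢ (T.filter fun t => MvPolynomial.eval t G = 0) := by
        intro a ha
        rw [hZB, Finset.mem_filter] at ha
        rw [Finset.mem_product]
        refine ⟨Fintype.mem_piFinset.mp ha.1 0, ?_⟩
        rw [Finset.mem_filter]
        refine ⟨?_, ha.2⟩
        rw [hT, Fintype.mem_piFinset]
        intro j
        exact Fintype.mem_piFinset.mp ha.1 j.succ
      calc ZB.card ≤ ((S 0) ×ˢ (T.filter fun t => MvPolynomial.eval t G = 0)).card :=
            Finset.card_le_card_of_injOn _ hmaps hinj
        _ = (S 0).card * (T.filter fun t => MvPolynomial.eval t G = 0).card :=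
            Finset.card_product _ _
        _ ≤ (S 0).card * ∑ j : Fin n, It j * ∏ k ∈ Finset.univ.erase j, (S' k).card :=
            Nat.mul_le_mul_left _ (ih S' G It hGcoeff hGlead)
    -- arithmetic
    have key0 : ∏ k ∈ Finset.univ.erase (0 : Fin (n + 1)), (S k).card
        = ∏ k : Fin n, (S' k).card := by
      rw [prod_erase_eq_prod_ite, Fin.prod_univ_succ, if_pos rfl, one_mul]
      refine Finset.prod_congr rfl fun k _ => ?_
      rw [if_neg (Fin.succ_ne_zero k)]
    have key : ∀ j : Fin n, ∏ k ∈ Finset.univ.erase (Fin.succ j), (S k).card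
        = (S 0).card * ∏ k ∈ Finset.univ.erase j, (S' k).card := by
      intro j
      rw [prod_erase_eq_prod_ite, prod_erase_eq_prod_ite, Fin.prod_univ_succ]
      rw [if_neg (Ne.symm (Fin.succ_ne_zero j))]
      congr 1
      refine Finset.prod_congr rfl fun k _ => ?_
      simp [Fin.succ_inj, hS']
    calc Z.card ≤ (ZA ∪ ZB).card := Finset.card_le_card hsub
      _ ≤ ZA.card + ZB.card := Finset.card_union_le _ _
      _ ≤ i0 * ∏ j : Fin n, (S' j).card + (S 0).card *
            ∑ j : Fin n, It j * ∏ k ∈ Finset.univ.erase j, (S' k).card := add_le_add hA hB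
      _ = ∑ j : Fin (n + 1), I j * ∏ k ∈ Finset.univ.erase j, (S k).card := by
          rw [Fin.sum_univ_succ, key0]
          congr 1
          rw [Finset.mul_sum]
          refine Finset.sum_congr rfl fun j _ => ?_
          rw [key j]
          have : It j = I j.succ := Finsupp.tail_apply j I
          rw [this]
          ring
end

section
/- (Footprint bound, special case) Let F be a field, and let F(X_1,...,X_m) be a nonzero polynomial whose leading monomial with respect to a lexicographic ordering is X_1^{i_1}···X_m^{i_m} with i_j < s_j for all j. Then the number of zeros of F in S_1 × ... × S_m is at most s_1···s_m − (s_1−i_1)(s_2−i_2)···(s_m−i_m). -/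
open Finset Classical

open MvPolynomial in
/-- Key lemma: the number of non-vanishing points is at least `∏ (s_j - i_j)`. -/
theorem footprint_key {K : Type*} [Field K] : ∀ (m : ℕ) (S : Fin m → Finset K)
    (F : MvPolynomial (Fin m) K) (I : Fin m →₀ ℕ),
    F.coeff I ≠ 0 → (∀ d ∈ F.support, toLex d ≤ toLex I) →
    ∏ j : Fin m, ((S j).card - I j) ≤
      ((Fintype.piFinset S).filter (fun a => MvPolynomial.eval a F ≠ 0)).card := by
  intro m
  induction m with
  | zero =>
      intro S F I hc hl
      have hmem : Fin.elim0 ∈ (Fintype.piFinset S).filter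
          (fun a => MvPolynomial.eval a F ≠ 0) := by
        rw [Finset.mem_filter]
        refine ⟨by rw [Fintype.mem_piFinset]; exact fun i => i.elim0, ?_⟩
        have hI0 : I = 0 := Subsingleton.elim _ _
        rw [MvPolynomial.eq_C_of_isEmpty F, MvPolynomial.eval_C]
        rw [hI0] at hc
        exact hc
      simp only [Finset.univ_eq_empty, Finset.prod_empty]
      exact Finset.card_pos.mpr ⟨_, hmem⟩
  | succ n ih =>
      intro S F I hc hl
      set Q := finSuccEquiv K n F with hQ
      set I' := Finsupp.tail I with hI'
      set G := Q.coeff (I 0) with hG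
      have hcons : Finsupp.cons (I 0) I' = I := Finsupp.cons_tail I
      have hGc : G.coeff I' ≠ 0 := by
        rw [hG, hQ, finSuccEquiv_coeff_coeff, hcons]; exact hc
      -- leading monomial of G is I'
      have hGl : ∀ d ∈ G.support, toLex d ≤ toLex I' := by
        intro d hd
        rw [MvPolynomial.mem_support_iff, hG, hQ, finSuccEquiv_coeff_coeff] at hd
        have h1 : toLex (Finsupp.cons (I 0) d) ≤ toLex I :=
          hl _ (MvPolynomial.mem_support_iff.mpr hd)
        rw [le_iff_eq_or_lt, Finsupp.Lex.lt_iff] at h1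
        rcases h1 with h1 | ⟨i, hji, hi⟩
        · left
          have : Finsupp.cons (I 0) d = I := congrArg ofLex h1
          have := congrArg Finsupp.tail this
          rw [Finsupp.tail_cons] at this
          rw [this]
        · rcases Fin.eq_zero_or_eq_succ i with rfl | ⟨k, rfl⟩
          · exfalso
            simp only [ofLex_toLex, Finsupp.cons_zero] at hi
            exact lt_irrefl _ hi
          · right
            refine Finsupp.Lex.lt_iff.mpr ⟨k, ?_, ?_⟩
            · intro j hj
              have := hji j.succ (by simpa using hj)
              simpa [Finsupp.cons_succ, Finsupp.tail_apply, hI'] using this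
            · have := hi
              simpa [Finsupp.cons_succ, Finsupp.tail_apply, hI'] using this
      -- degree bound for Q
      have hQdeg : Q.natDegree ≤ I 0 := by
        rw [Polynomial.natDegree_le_iff_coeff_eq_zero]
        intro k hk
        by_contra hQk
        obtain ⟨d, hd⟩ := MvPolynomial.ne_zero_iff.mp hQk
        rw [hQ, finSuccEquiv_coeff_coeff] at hd
        have h1 : toLex (Finsupp.cons k d) ≤ toLex I :=
          hl _ (MvPolynomial.mem_support_iff.mpr hd)
        have h2 : k ≤ I 0 := by
          rw [le_iff_eq_or_lt, Finsupp.Lex.lt_iff] at h1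
          rcases h1 with h1 | ⟨i, hji, hi⟩
          · have : Finsupp.cons k d = I := congrArg ofLex h1
            have := congrArg (fun f => f 0) this
            simpa [Finsupp.cons_zero] using this.le
          · rcases Fin.eq_zero_or_eq_succ i with rfl | ⟨j, rfl⟩
            · simpa [Finsupp.cons_zero] using hi.le
            · have := hji 0 (by simp [Fin.succ_pos])
              simpa [Finsupp.cons_zero] using this.le
        omega
      -- apply IH
      set T := (Fintype.piFinset (fun j : Fin n => S j.succ)).filter
        (fun x => MvPolynomial.eval x G ≠ 0) with hT
      have hTcard : ∏ j : Fin n, ((S j.succ).card - I' j) ≤ T.card :=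
        ih (fun j => S j.succ) G I' hGc hGl
      -- for x ∈ T, count non-roots in S 0
      set A : (Fin n → K) → Finset K := fun x =>
        (S 0).filter (fun a => MvPolynomial.eval (Fin.cons a x) F ≠ 0) with hA
      have hAcard : ∀ x ∈ T, (S 0).card - I 0 ≤ (A x).card := by
        intro x hx
        rw [hT, Finset.mem_filter] at hx
        set p := Q.map (MvPolynomial.eval x) with hp
        have hpI : p.coeff (I 0) ≠ 0 := by
          rw [hp, Polynomial.coeff_map]; exact hx.2
        have hpne : p ≠ 0 := fun h => hpI (by simp [h])
        have hroots : ((S 0).filter (fun a => MvPolynomial.eval (Fin.cons a x) F = 0)).card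
            ≤ I 0 := by
          have hsub : (S 0).filter (fun a => MvPolynomial.eval (Fin.cons a x) F = 0)
              ⊆ p.roots.toFinset := by
            intro a ha
            rw [Finset.mem_filter] at ha
            rw [Multiset.mem_toFinset, Polynomial.mem_roots hpne, Polynomial.IsRoot.def]
            rw [MvPolynomial.eval_eq_eval_mv_eval'] at ha
            exact ha.2
          calc ((S 0).filter (fun a => MvPolynomial.eval (Fin.cons a x) F = 0)).card
              ≤ p.roots.toFinset.card := Finset.card_le_card hsub
            _ ≤ Multiset.card p.roots := p.roots.toFinset_card_le
            _ ≤ p.natDegree := p.card_roots'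
            _ ≤ Q.natDegree := Polynomial.natDegree_map_le
            _ ≤ I 0 := hQdeg
        have hsplit := Finset.card_filter_add_card_filter_not
          (s := S 0) (p := fun a => MvPolynomial.eval (Fin.cons a x) F = 0)
        have hAe : (A x).card = ((S 0).filter
            (fun a => ¬ MvPolynomial.eval (Fin.cons a x) F = 0)).card := by
          simp only [hA, ne_eq]
        rw [hAe]
        omega
      -- assemble via biUnion
      set B := T.biUnion (fun x => (A x).image (fun a => (Fin.cons a x : Fin (n + 1) → K))) with hB
      have hBsub : B ⊆ (Fintype.piFinset S).filter (fun a => MvPolynomial.eval a F ≠ 0) := by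
        intro y hy
        rw [hB, Finset.mem_biUnion] at hy
        obtain ⟨x, hx, hy⟩ := hy
        rw [Finset.mem_image] at hy
        obtain ⟨a, ha, rfl⟩ := hy
        rw [hA, Finset.mem_filter] at ha
        rw [hT, Finset.mem_filter] at hx
        rw [Finset.mem_filter]
        refine ⟨?_, ha.2⟩
        rw [Fintype.mem_piFinset]
        intro i
        refine Fin.cases ?_ ?_ i
        · simpa using ha.1
        · intro j
          simpa using (Fintype.mem_piFinset.mp hx.1) j
      have hBcard : ∑ x ∈ T, (A x).card = B.card := by
        rw [hB]
        rw [Finset.card_biUnion]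
        · refine Finset.sum_congr rfl ?_
          intro x _
          rw [Finset.card_image_of_injective]
          intro a b hab
          have := congrFun hab 0
          simpa using this
        · intro x _ y _ hxy
          rw [Function.onFun, Finset.disjoint_left]
          intro z hz hz'
          rw [Finset.mem_image] at hz hz'
          obtain ⟨a, _, rfl⟩ := hz
          obtain ⟨b, _, hb⟩ := hz'
          apply hxy
          have := congrArg Fin.tail hb
          rw [Fin.tail_cons, Fin.tail_cons] at this
          exact this.symm
      calc ∏ j : Fin (n + 1), ((S j).card - I j)
          = ((S 0).card - I 0) * ∏ j : Fin n, ((S j.succ).card - I j.succ) := by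
            rw [Fin.prod_univ_succ]
        _ = ((S 0).card - I 0) * ∏ j : Fin n, ((S j.succ).card - I' j) := by
            simp only [hI', Finsupp.tail_apply]
        _ ≤ ((S 0).card - I 0) * T.card := Nat.mul_le_mul_left _ hTcard
        _ = ∑ _x ∈ T, ((S 0).card - I 0) := by rw [Finset.sum_const, smul_eq_mul, mul_comm]
        _ ≤ ∑ x ∈ T, (A x).card := Finset.sum_le_sum hAcard
        _ = B.card := hBcard
        _ ≤ _ := Finset.card_le_card hBsub

/-- Footprint bound, special case: if the leading monomial of a nonzero
polynomial `F` with respect to the lexicographic ordering is `X_1^{i_1}⋯X_m^{i_m}` with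
`i_j < s_j` for all `j`, then the number of zeros of `F` in `S_1 × ⋯ × S_m` is at most
`s_1⋯s_m − (s_1−i_1)⋯(s_m−i_m)`. -/
theorem footprint_bound {m : ℕ} {K : Type*} [Field K]
    (S : Fin m → Finset K) (F : MvPolynomial (Fin m) K) (I : Fin m →₀ ℕ)
    (hcoeff : F.coeff I ≠ 0)
    (hlead : ∀ d ∈ F.support, toLex d ≤ toLex I)
    (hI : ∀ j, I j < (S j).card) :
    ((Fintype.piFinset S).filter (fun a => MvPolynomial.eval a F = 0)).card
      ≤ ∏ j : Fin m, (S j).card - ∏ j : Fin m, ((S j).card - I j) := by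
  have hkey := footprint_key m S F I hcoeff hlead
  have hsplit := Finset.card_filter_add_card_filter_not
    (s := Fintype.piFinset S) (p := fun a => MvPolynomial.eval a F = 0)
  have hcard : (Fintype.piFinset S).card = ∏ j : Fin m, (S j).card :=
    Fintype.card_piFinset S
  simp only [ne_eq] at hkey
  omega
end

section
/- The minimum distance of the affine variety code E(M,S) is at least min{(s_1−i_1)(s_2−i_2)···(s_m−i_m) : X_1^{i_1}···X_m^{i_m} ∈ M}, and this bound is attained with equality if M is closed under taking divisors of monomials. -/
open Finset Classical MvPolynomial

private lemma card_attach_filter' {α : Type*} (s : Finset α) (p : α → Prop)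
    [DecidablePred p] [DecidablePred fun a : {x // x ∈ s} => p a.1] :
    (Finset.univ.filter fun a : {x // x ∈ s} => p a.1).card = (s.filter p).card := by
  refine Finset.card_bij (fun a _ => a.1) ?_ ?_ ?_
  · intro a ha
    exact Finset.mem_filter.2 ⟨a.2, (Finset.mem_filter.1 ha).2⟩
  · intro a _ b _ h
    exact Subtype.ext h
  · intro b hb
    exact ⟨⟨b, (Finset.mem_filter.1 hb).1⟩,
      Finset.mem_filter.2 ⟨Finset.mem_univ _, (Finset.mem_filter.1 hb).2⟩, rfl⟩

private lemma footprint' {K : Type*} [Field K] [DecidableEq K] :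
    ∀ (m : ℕ) (S : Fin m → Finset K) (f : MvPolynomial (Fin m) K), f ≠ 0 →
      ∃ d ∈ f.support,
        ∏ i, ((S i).card - d i) ≤
          ((Fintype.piFinset S).filter fun a => eval a f ≠ 0).card := by
  intro m
  induction m with
  | zero =>
    intro S f hf
    have h0 : coeff 0 f ≠ 0 := by
      intro h
      exact hf (by rw [eq_C_of_isEmpty f, h, map_zero])
    refine ⟨0, mem_support_iff.2 h0, ?_⟩
    simp only [Finset.univ_eq_empty, Finset.prod_empty]
    refine Finset.card_pos.2 ⟨(fun i => i.elim0), ?_⟩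
    refine Finset.mem_filter.2 ⟨Fintype.mem_piFinset.2 fun i => i.elim0, ?_⟩
    rw [eq_C_of_isEmpty f, eval_C]
    exact h0
  | succ n ih =>
    intro S f hf
    set F := finSuccEquiv K n f with hFdef
    have hF : F ≠ 0 := by
      simp only [hFdef]
      exact (map_ne_zero_iff _ (AlgEquiv.injective _)).2 hf
    set t := F.natDegree with htdef
    set g := F.coeff t with hgdef
    have hg : g ≠ 0 := Polynomial.leadingCoeff_ne_zero.2 hF
    obtain ⟨e, he, hcard⟩ := ih (fun i => S i.succ) g hg
    refine ⟨Finsupp.cons t e, ?_, ?_⟩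
    · rw [mem_support_iff, ← finSuccEquiv_coeff_coeff]
      exact mem_support_iff.1 he
    set P := (Fintype.piFinset fun i => S i.succ).filter fun p => eval p g ≠ 0 with hPdef
    set inner := fun p : Fin n → K =>
      (S 0).filter fun y => Polynomial.eval y (F.map (eval p)) ≠ 0 with hinner
    have key : ∀ p ∈ P, (S 0).card - t ≤ (inner p).card := by
      intro p hp
      set q := F.map (eval p) with hq
      have hq0 : q ≠ 0 := by
        intro h
        apply (Finset.mem_filter.1 hp).2
        have : q.coeff t = 0 := by rw [h]; simp
        rwa [hq, Polynomial.coeff_map] at this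
      have hroots : ((S 0).filter fun y => Polynomial.eval y q = 0).card ≤ t := by
        have hsub : ((S 0).filter fun y => Polynomial.eval y q = 0) ⊆ q.roots.toFinset := by
          intro y hy
          rw [Multiset.mem_toFinset, Polynomial.mem_roots hq0]
          exact (Finset.mem_filter.1 hy).2
        calc ((S 0).filter fun y => Polynomial.eval y q = 0).card
            ≤ q.roots.toFinset.card := Finset.card_le_card hsub
          _ ≤ Multiset.card q.roots := Multiset.toFinset_card_le _
          _ ≤ q.natDegree := Polynomial.card_roots' q
          _ ≤ t := Polynomial.natDegree_map_le
      have hsplit := Finset.card_filter_add_card_filter_not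
        (s := S 0) (p := fun y => Polynomial.eval y q = 0)
      have hinnerq : (inner p).card
          = ((S 0).filter fun a => ¬Polynomial.eval a q = 0).card := rfl
      omega
    set U := P.biUnion (fun p => (inner p).image (fun y => (Fin.cons y p : Fin (n+1) → K))) with hU
    have hdisj : ∀ p ∈ P, ∀ p' ∈ P, p ≠ p' →
        Disjoint ((inner p).image (fun y => (Fin.cons y p : Fin (n+1) → K)))
          ((inner p').image (fun y => (Fin.cons y p' : Fin (n+1) → K))) := by
      intro p _ p' _ hpp'
      rw [Finset.disjoint_left]
      rintro x hx hx'
      obtain ⟨y, _, rfl⟩ := Finset.mem_image.1 hx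
      obtain ⟨y', _, hyy'⟩ := Finset.mem_image.1 hx'
      apply hpp'
      have := congrArg Fin.tail hyy'
      rw [Fin.tail_cons, Fin.tail_cons] at this
      exact this.symm
    have hUsub : U ⊆ (Fintype.piFinset S).filter fun a => eval a f ≠ 0 := by
      intro x hx
      obtain ⟨p, hp, hx⟩ := Finset.mem_biUnion.1 hx
      obtain ⟨y, hy, rfl⟩ := Finset.mem_image.1 hx
      refine Finset.mem_filter.2 ⟨Fintype.mem_piFinset.2 ?_, ?_⟩
      · intro i
        refine Fin.cases ?_ ?_ i
        · simpa using (Finset.mem_filter.1 hy).1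
        · intro j
          simpa using Fintype.mem_piFinset.1 (Finset.mem_filter.1 hp).1 j
      · rw [eval_eq_eval_mv_eval']
        exact (Finset.mem_filter.1 hy).2
    calc ∏ i, ((S i).card - (Finsupp.cons t e) i)
        = ((S 0).card - t) * ∏ i : Fin n, ((S i.succ).card - e i) := by
          rw [Fin.prod_univ_succ]
          simp [Finsupp.cons_zero, Finsupp.cons_succ]
      _ ≤ ((S 0).card - t) * P.card := Nat.mul_le_mul_left _ hcard
      _ = ∑ _p ∈ P, ((S 0).card - t) := by rw [Finset.sum_const, smul_eq_mul, mul_comm]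
      _ ≤ ∑ p ∈ P, ((inner p).image (fun y => (Fin.cons y p : Fin (n+1) → K))).card := by
          refine Finset.sum_le_sum fun p hp => ?_
          rw [Finset.card_image_of_injective _ (Fin.cons_left_injective _)]
          exact key p hp
      _ = U.card := (Finset.card_biUnion hdisj).symm
      _ ≤ _ := Finset.card_le_card hUsub

private lemma degreeOf_X_sub_C_le' {σ : Type*} [DecidableEq σ] {K : Type*} [CommRing K]
    [Nontrivial K] (i j : σ) (a : K) :
    MvPolynomial.degreeOf i (MvPolynomial.X j - MvPolynomial.C a) ≤ if i = j then 1 else 0 := by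
  rw [sub_eq_add_neg, ← map_neg]
  refine le_trans (MvPolynomial.degreeOf_add_le _ _ _) ?_
  simp [MvPolynomial.degreeOf_X, MvPolynomial.degreeOf_C]


/-- The minimum distance of the affine variety code `E(M,S)` is at least
`min{(s_1−i_1)⋯(s_m−i_m) : X_1^{i_1}⋯X_m^{i_m} ∈ M}`, with equality when `M` is closed
under taking divisors of monomials. -/
theorem affine_variety_code_min_distance {m : ℕ} {K : Type*} [Field K] [Fintype K]
    (S : Fin m → Finset K) (M : Finset (Fin m →₀ ℕ)) (hMne : M.Nonempty)
    (hM : ∀ d ∈ M, ∀ i, d i < (S i).card) :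
    ∀ δ, δ = (M.image fun d => ∏ i : Fin m, ((S i).card - d i)).min' (hMne.image _) →
    ∀ ev : (Fin m →₀ ℕ) → ({a // a ∈ Fintype.piFinset S} → K),
      ev = (fun d a => MvPolynomial.eval a.1 (MvPolynomial.monomial d (1 : K))) →
    ((∀ c ∈ Submodule.span K (ev '' ↑M), c ≠ 0 →
        δ ≤ (Finset.univ.filter (fun a => c a ≠ 0)).card) ∧
     ((∀ d ∈ M, ∀ e : Fin m →₀ ℕ, e ≤ d → e ∈ M) →
        ∃ c ∈ Submodule.span K (ev '' ↑M), c ≠ 0 ∧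
          (Finset.univ.filter (fun a => c a ≠ 0)).card = δ)) := by
  intro δ hδ ev hev
  constructor
  · intro c hc hc0
    classical
    rw [Finsupp.mem_span_image_iff_linearCombination] at hc
    obtain ⟨l, hl, hlc⟩ := hc
    set f : MvPolynomial (Fin m) K := ∑ e ∈ l.support, monomial e (l e) with hfdef
    have hevalf : ∀ a : {a // a ∈ Fintype.piFinset S}, eval a.1 f = c a := by
      intro a
      rw [← hlc, Finsupp.linearCombination_apply, Finsupp.sum, Finset.sum_apply, hfdef, map_sum]
      refine Finset.sum_congr rfl fun e _ => ?_
      simp [hev, eval_monomial]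
    have hcoeff : ∀ e, coeff e f = l e := by
      intro e
      rw [hfdef, coeff_sum]
      simp only [coeff_monomial]
      rw [Finset.sum_ite_eq' l.support e l]
      split
      · rfl
      · exact (Finsupp.notMem_support_iff.1 ‹_›).symm
    have hf0 : f ≠ 0 := by
      intro h
      apply hc0
      funext a
      rw [← hevalf a, h, map_zero]
      rfl
    obtain ⟨d, hd, hcard⟩ := footprint' m S f hf0
    have hdM : d ∈ M := by
      have : l d ≠ 0 := by rw [← hcoeff]; exact mem_support_iff.1 hd
      exact hl (Finsupp.mem_support_iff.2 this)
    have h1 : δ ≤ ∏ i, ((S i).card - d i) := by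
      rw [hδ]
      exact Finset.min'_le _ _ (Finset.mem_image_of_mem _ hdM)
    refine le_trans h1 (le_trans hcard (le_of_eq ?_))
    rw [← card_attach_filter' (Fintype.piFinset S) (fun x => eval x f ≠ 0)]
    congr 1
    refine Finset.filter_congr fun a _ => ?_
    rw [hevalf a]
  · intro hclosed
    classical
    have hmem := Finset.min'_mem (M.image fun d => ∏ i : Fin m, ((S i).card - d i)) (hMne.image _)
    rw [Finset.mem_image] at hmem
    obtain ⟨d, hdM, hdval⟩ := hmem
    have hδd : δ = ∏ i : Fin m, ((S i).card - d i) := by rw [hδ, hdval]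
    have hTex : ∀ i, ∃ T ⊆ S i, T.card = d i :=
      fun i => Finset.exists_subset_card_eq (hM d hdM i).le
    choose T hT hTcard using hTex
    set f : MvPolynomial (Fin m) K := ∏ i : Fin m, ∏ a ∈ T i, (X i - C a) with hfdef
    -- support bound
    have hsupp : ∀ e ∈ f.support, e ∈ M := by
      intro e he
      refine hclosed d hdM e ?_
      intro i
      calc e i ≤ degreeOf i f := monomial_le_degreeOf i he
        _ ≤ d i := by
          refine le_trans (degreeOf_prod_le i _ _) ?_
          have hb : ∀ j, degreeOf i (∏ a ∈ T j, (X j - C a)) ≤ if j = i then d i else 0 := by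
            intro j
            refine le_trans (degreeOf_prod_le i _ _) ?_
            by_cases hji : j = i
            · subst hji
              simp only [if_pos rfl]
              calc ∑ a ∈ T j, degreeOf j (X j - C a) ≤ ∑ _a ∈ T j, 1 :=
                  Finset.sum_le_sum fun a _ => by
                    simpa using degreeOf_X_sub_C_le' j j a
                _ = d j := by rw [Finset.sum_const, smul_eq_mul, mul_one, hTcard]
            · simp only [if_neg hji]
              have hz : ∀ a ∈ T j, degreeOf i (X j - C a) = 0 := by
                intro a _
                have h := degreeOf_X_sub_C_le' i j a
                rw [if_neg (fun h' : i = j => hji h'.symm)] at h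
                exact Nat.le_zero.1 h
              calc ∑ a ∈ T j, degreeOf i (X j - C a) = ∑ _a ∈ T j, 0 :=
                  Finset.sum_congr rfl hz
                _ ≤ 0 := by simp
          calc ∑ j, degreeOf i (∏ a ∈ T j, (X j - C a))
              ≤ ∑ j, if j = i then d i else 0 := Finset.sum_le_sum fun j _ => hb j
            _ = d i := by simp
    -- evaluation
    have heval : ∀ x : Fin m → K, eval x f = ∏ i, ∏ a ∈ T i, (x i - a) := by
      intro x
      simp [hfdef]
    have hne : ∀ x : Fin m → K, eval x f ≠ 0 ↔ ∀ i, x i ∉ T i := by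
      intro x
      rw [heval]
      rw [Finset.prod_ne_zero_iff]
      constructor
      · intro h i hxi
        have := Finset.prod_ne_zero_iff.1 (h i (Finset.mem_univ i)) (x i) hxi
        simp at this
      · intro h i _
        refine Finset.prod_ne_zero_iff.2 fun a ha => ?_
        exact sub_ne_zero.2 fun hxa => h i (hxa ▸ ha)
    -- counting
    have hfilter : (Fintype.piFinset S).filter (fun x => eval x f ≠ 0)
        = Fintype.piFinset (fun i => S i \ T i) := by
      ext x
      simp only [Finset.mem_filter, Fintype.mem_piFinset, hne, Finset.mem_sdiff]
      constructor
      · rintro ⟨h1, h2⟩ i; exact ⟨h1 i, h2 i⟩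
      · intro h; exact ⟨fun i => (h i).1, fun i => (h i).2⟩
    have hcount : ((Fintype.piFinset S).filter (fun x => eval x f ≠ 0)).card = δ := by
      rw [hfilter, Fintype.card_piFinset, hδd]
      exact Finset.prod_congr rfl fun i _ => by rw [Finset.card_sdiff_of_subset (hT i), hTcard]
    -- the codeword
    refine ⟨fun a => eval a.1 f, ?_, ?_, ?_⟩
    · have hc : (fun a : {a // a ∈ Fintype.piFinset S} => eval a.1 f)
          = ∑ e ∈ f.support, coeff e f • ev e := by
        funext a
        rw [Finset.sum_apply]
        conv_lhs => rw [f.as_sum]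
        rw [map_sum]
        refine Finset.sum_congr rfl fun e _ => ?_
        simp [hev, eval_monomial]
      rw [hc]
      exact Submodule.sum_mem _ fun e he => Submodule.smul_mem _ _
        (Submodule.subset_span ⟨e, hsupp e he, rfl⟩)
    · have hpos : 0 < δ := by
        rw [hδd]
        exact Finset.prod_pos fun i _ => Nat.sub_pos_of_lt (hM d hdM i)
      have : ((Fintype.piFinset S).filter (fun x => eval x f ≠ 0)).Nonempty := by
        rw [← Finset.card_pos, hcount]; exact hpos
      obtain ⟨x, hx⟩ := this
      intro h
      have hx' := Finset.mem_filter.1 hx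
      exact hx'.2 (congrFun h ⟨x, hx'.1⟩)
    · rw [← hcount]
      exact card_attach_filter' (Fintype.piFinset S) (fun x => eval x f ≠ 0)
end

section
/- Fix s_1 ≥ s_2 > 0 and weights w_1, w_2 > 0 with ρ = w_1/w_2 ≤ s_2/s_1, and let 0 < u ≤ (s_1−1)w_1. Then the minimum of (s_1−i_1)(s_2−i_2) over rational i_1, i_2 with 0 ≤ i_1 ≤ s_1−1, 0 ≤ i_2 ≤ s_2−1, w_1 i_1 + w_2 i_2 = u equals s_2(s_1 − u/w_1). -/
/-- for `s_1 ≥ s_2 > 0`, weights `w_1, w_2 > 0` with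
`ρ = w_1/w_2 ≤ s_2/s_1`, and `0 < u ≤ (s_1−1)w_1`, the minimum of
`(s_1−i_1)(s_2−i_2)` over rational `0 ≤ i_1 ≤ s_1−1`, `0 ≤ i_2 ≤ s_2−1` with
`w_1 i_1 + w_2 i_2 = u` equals `s_2(s_1 − u/w_1)`. -/
theorem min_distance_region_I (s1 s2 : ℕ) (hs2 : 0 < s2) (hs : s2 ≤ s1)
    (w1 w2 u : ℚ) (hw1 : 0 < w1) (hw2 : 0 < w2)
    (hρ : w1 / w2 ≤ (s2 : ℚ) / s1)
    (hu0 : 0 < u) (huu : u ≤ ((s1 : ℚ) - 1) * w1) :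
    IsLeast {v : ℚ | ∃ i1 i2 : ℚ,
        0 ≤ i1 ∧ i1 ≤ (s1 : ℚ) - 1 ∧ 0 ≤ i2 ∧ i2 ≤ (s2 : ℚ) - 1 ∧
        w1 * i1 + w2 * i2 = u ∧ v = ((s1 : ℚ) - i1) * ((s2 : ℚ) - i2)}
      ((s2 : ℚ) * ((s1 : ℚ) - u / w1)) := by
  have hs1q : (0 : ℚ) < (s1 : ℚ) := by
    exact_mod_cast lt_of_lt_of_le hs2 hs
  have hs2q : (0 : ℚ) < (s2 : ℚ) := by exact_mod_cast hs2
  have hss : w1 * s1 ≤ w2 * s2 := by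
    rw [div_le_div_iff₀ hw2 hs1q] at hρ; linarith
  constructor
  · refine ⟨u / w1, 0, le_of_lt (div_pos hu0 hw1), ?_, le_refl 0, by have h : (1:ℚ) ≤ (s2:ℚ) := (by exact_mod_cast hs2); linarith, ?_, by ring⟩
    · rw [div_le_iff₀ hw1]; linarith
    · field_simp; ring
  · rintro v ⟨i1, i2, h1, h2, h3, h4, h5, rfl⟩
    have hu : u / w1 = i1 + w2 / w1 * i2 := by
      field_simp; linarith
    rw [hu]
    have key : (0:ℚ) ≤ i2 * (w2 / w1 * s2 - s1 + i1) := by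
      apply mul_nonneg h3
      have : (s1 : ℚ) ≤ w2 / w1 * s2 := by
        rw [div_mul_eq_mul_div, le_div_iff₀ hw1]; nlinarith
      linarith
    nlinarith [key]
end

section
/- For any polynomial F over a field F, any point a ∈ F^m, and any multi-index k = (k_1,...,k_m), the multiplicity of the k-th Hasse derivative of F at a satisfies mult(F^{(k)}, a) ≥ mult(F, a) − (k_1 + ... + k_m). -/
open MvPolynomial

/-- The `k`-th Hasse derivative of a multivariate polynomial `F`: the coefficient of
`Z^k` in `F(X+Z)`, given by `F^{(k)} = ∑_d ∏_i C(d_i, k_i) · coeff_d(F) · X^{d−k}`. -/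
noncomputable def mvHasseDeriv {σ K : Type*} [CommRing K] [DecidableEq σ]
    (k : σ →₀ ℕ) (F : MvPolynomial σ K) : MvPolynomial σ K :=
  ∑ d ∈ F.support,
    MvPolynomial.monomial (d - k)
      ((∏ i ∈ k.support, Nat.choose (d i) (k i) : ℕ) • F.coeff d)

/-- `multGE F a M` means that the multiplicity of `F` at the point `a` is at least `M`,
i.e. all Hasse derivatives of order `< M` vanish at `a`. -/
def multGE {σ K : Type*} [CommRing K] [DecidableEq σ]
    (F : MvPolynomial σ K) (a : σ → K) (M : ℕ) : Prop :=
  ∀ k : σ →₀ ℕ, (k.sum fun _ n => n) < M → MvPolynomial.eval a (mvHasseDeriv k F) = 0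

/-- The multiplicity of `F` at `a`: the largest `M` such that all Hasse derivatives of
order `< M` vanish at `a` (junk value `0` for the zero polynomial, whose multiplicity
is infinite). -/
noncomputable def multAt {σ K : Type*} [CommRing K] [DecidableEq σ]
    (F : MvPolynomial σ K) (a : σ → K) : ℕ :=
  sSup {M | multGE F a M}

lemma nat_choose_assoc (a b c : ℕ) :
    (a + b).choose b * (a + b + c).choose c = (b + c).choose b * (a + b + c).choose (b + c) := by
  have h1 := Nat.choose_mul_factorial_mul_factorial (show b ≤ a + b by omega)
  have h2 := Nat.choose_mul_factorial_mul_factorial (show c ≤ a + b + c by omega)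
  have h3 := Nat.choose_mul_factorial_mul_factorial (show b ≤ b + c by omega)
  have h4 := Nat.choose_mul_factorial_mul_factorial (show b + c ≤ a + b + c by omega)
  have key : ((a + b).choose b * (a + b + c).choose c) * (a.factorial * b.factorial * c.factorial)
      = ((b + c).choose b * (a + b + c).choose (b + c)) *
        (a.factorial * b.factorial * c.factorial) := by
    have e1 : a + b - b = a := by omega
    have e2 : a + b + c - c = a + b := by omega
    have e3 : b + c - b = c := by omega
    have e4 : a + b + c - (b + c) = a := by omega
    rw [e1] at h1; rw [e2] at h2; rw [e3] at h3; rw [e4] at h4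
    calc ((a + b).choose b * (a + b + c).choose c) * (a.factorial * b.factorial * c.factorial)
        = ((a + b).choose b * b.factorial * a.factorial) *
          ((a + b + c).choose c * c.factorial) := by ring
      _ = (a + b).factorial * ((a + b + c).choose c * c.factorial) := by rw [h1]
      _ = (a + b + c).choose c * c.factorial * (a + b).factorial := by ring
      _ = (a + b + c).factorial := h2
      _ = (a + b + c).choose (b + c) * (b + c).factorial * a.factorial := h4.symm
      _ = ((b + c).choose b * b.factorial * c.factorial) * ((a + b + c).choose (b + c))
            * a.factorial := by rw [← h3]; ring
      _ = _ := by ring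
  exact Nat.eq_of_mul_eq_mul_right
    (by positivity) key

lemma prod_choose_support_eq {m : ℕ} (k d : Fin m →₀ ℕ) :
    (∏ i ∈ k.support, Nat.choose (d i) (k i)) = ∏ i : Fin m, Nat.choose (d i) (k i) := by
  refine Finset.prod_subset (Finset.subset_univ _) fun i _ hi => ?_
  rw [Finsupp.notMem_support_iff.mp hi, Nat.choose_zero_right]

lemma coeff_mvHasseDeriv {m : ℕ} {K : Type*} [CommRing K]
    (k e : Fin m →₀ ℕ) (F : MvPolynomial (Fin m) K) :
    (mvHasseDeriv k F).coeff e
      = (∏ i : Fin m, Nat.choose (e i + k i) (k i)) • F.coeff (e + k) := by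
  unfold mvHasseDeriv
  rw [MvPolynomial.coeff_sum]
  simp_rw [MvPolynomial.coeff_monomial]
  have hek : (e + k) - k = e := add_tsub_cancel_right e k
  rw [Finset.sum_eq_single (e + k)]
  · rw [if_pos hek, prod_choose_support_eq]
    simp [Finsupp.add_apply]
  · intro d _ hd
    split_ifs with hdk
    · have hle : ¬ k ≤ d := by
        intro hkd
        exact hd (by rw [← hdk, tsub_add_cancel_of_le hkd])
      rw [Finsupp.le_def] at hle
      push_neg at hle
      obtain ⟨i, hi⟩ := hle
      have hzero : (∏ j ∈ k.support, Nat.choose (d j) (k j)) = 0 := by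
        refine Finset.prod_eq_zero (i := i) (Finsupp.mem_support_iff.mpr ?_) ?_
        · omega
        · exact Nat.choose_eq_zero_of_lt hi
      rw [hzero, zero_smul]
    · rfl
  · intro hnot
    rw [MvPolynomial.notMem_support_iff.mp hnot, smul_zero, if_pos hek]

lemma mvHasseDeriv_comp {m : ℕ} {K : Type*} [CommRing K]
    (j k : Fin m →₀ ℕ) (F : MvPolynomial (Fin m) K) :
    mvHasseDeriv j (mvHasseDeriv k F)
      = (∏ i : Fin m, Nat.choose (j i + k i) (j i)) • mvHasseDeriv (j + k) F := by
  apply MvPolynomial.ext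
  intro e
  rw [MvPolynomial.coeff_smul, coeff_mvHasseDeriv, coeff_mvHasseDeriv, coeff_mvHasseDeriv,
    smul_smul, smul_smul, ← add_assoc]
  congr 1
  rw [← Finset.prod_mul_distrib, ← Finset.prod_mul_distrib]
  apply Finset.prod_congr rfl
  intro i _
  simp only [Finsupp.add_apply]
  have := nat_choose_assoc (e i) (j i) (k i)
  have h1 : (e + j) i = e i + j i := rfl
  rw [show e i + (j i + k i) = e i + j i + k i by omega]
  omega

/-- for any polynomial `F`, point `a` and multi-index `k`,
`mult(F^{(k)}, a) ≥ mult(F, a) − (k_1 + ⋯ + k_m)` (stated via the predicate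
"multiplicity at least `M`", which also handles the zero polynomial correctly). -/
theorem multGE_mvHasseDeriv {m : ℕ} {K : Type*} [Field K]
    (F : MvPolynomial (Fin m) K) (a : Fin m → K) (k : Fin m →₀ ℕ) (M : ℕ)
    (h : multGE F a M) :
    multGE (mvHasseDeriv k F) a (M - k.sum fun _ n => n) := by
  intro j hj
  rw [mvHasseDeriv_comp, map_nsmul]
  have hjk : ((j + k).sum fun _ n => n) < M := by
    rw [Finsupp.sum_add_index' (fun _ => rfl) (fun _ _ _ => rfl)]
    omega
  rw [h (j + k) hjk, smul_zero]
end

section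
/- For F ∈ F[X_1,...,X_m] and an m-tuple Q = (Q_1,...,Q_l → m) of polynomials in l variables, and any a ∈ F^l, the multiplicity of the composition satisfies mult(F ∘ Q, a) ≥ mult(F, Q(a)). -/
open MvPolynomial

theorem mvHasseDeriv_coeff {σ K : Type*} [CommRing K] [DecidableEq σ]
    (k e : σ →₀ ℕ) (F : MvPolynomial σ K) :
    (mvHasseDeriv k F).coeff e =
      ((∏ i ∈ k.support, Nat.choose ((e + k) i) (k i) : ℕ) : K) * F.coeff (e + k) := by
  unfold mvHasseDeriv
  rw [MvPolynomial.coeff_sum]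
  simp only [MvPolynomial.coeff_monomial, nsmul_eq_mul]
  rw [Finset.sum_eq_single (e + k)]
  · rw [if_pos (by rw [add_tsub_cancel_right])]
  · intro d hd hne
    split_ifs with hdk
    · -- d - k = e, d ≠ e + k ⇒ ∃ i, d i < k i
      have : ¬ k ≤ d := by
        intro hle
        exact hne (by rw [← tsub_add_cancel_of_le hle, hdk])
      rw [Finsupp.le_iff] at this
      push_neg at this
      obtain ⟨i, hi, hlt⟩ := this
      have : Nat.choose (d i) (k i) = 0 := Nat.choose_eq_zero_of_lt hlt
      rw [Finset.prod_eq_zero hi this]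
      simp
    · rfl
  · intro hmem
    rw [if_pos (by rw [add_tsub_cancel_right])]
    rw [MvPolynomial.notMem_support_iff.mp hmem, mul_zero]

theorem mvHasseDeriv_add {σ K : Type*} [CommRing K] [DecidableEq σ]
    (k : σ →₀ ℕ) (F G : MvPolynomial σ K) :
    mvHasseDeriv k (F + G) = mvHasseDeriv k F + mvHasseDeriv k G := by
  ext e
  simp [mvHasseDeriv_coeff, MvPolynomial.coeff_add, mul_add]

theorem mvHasseDeriv_monomial {σ K : Type*} [CommRing K] [DecidableEq σ]
    (k d : σ →₀ ℕ) (c : K) :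
    mvHasseDeriv k (MvPolynomial.monomial d c) =
      MvPolynomial.monomial (d - k) (((∏ i ∈ k.support, Nat.choose (d i) (k i) : ℕ) : K) * c) := by
  ext e
  rw [mvHasseDeriv_coeff]
  simp only [MvPolynomial.coeff_monomial]
  split_ifs with h1 h2 h2
  · rw [h1]
  · exact absurd (by rw [h1, add_tsub_cancel_right]) h2
  · -- e + k ≠ d, d - k = e: then prod = 0 or ... need (∏ choose (d i) (k i)) * c with coeff: show RHS-LHS
    -- here LHS = prod * 0 = 0, RHS = prod(d) * c ; need prod (d i).choose = 0
    rw [mul_zero]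
    have : ¬ k ≤ d := by
      intro hle
      exact h1 (by rw [← h2, tsub_add_cancel_of_le hle])
    rw [Finsupp.le_iff] at this
    push_neg at this
    obtain ⟨i, hi, hlt⟩ := this
    rw [Finset.prod_eq_zero hi (Nat.choose_eq_zero_of_lt hlt)]
    simp
  · rw [mul_zero]

theorem shift_pow {σ K : Type*} [CommRing K] [DecidableEq σ] (a : σ → K) (j : σ) (t : ℕ) :
    ((X j + C (a j) : MvPolynomial σ K)) ^ t =
      ∑ r ∈ Finset.range (t + 1),
        MvPolynomial.monomial (Finsupp.single j r) ((t.choose r : K) * a j ^ (t - r)) := by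
  rw [add_pow]
  apply Finset.sum_congr rfl
  intro r _
  rw [X_pow_eq_monomial, ← C_pow, ← MvPolynomial.C_eq_coe_nat, C_apply, C_apply,
    MvPolynomial.monomial_mul, MvPolynomial.monomial_mul]
  simp [mul_comm]

theorem sub_single_eq_erase {σ : Type*} [DecidableEq σ] (k : σ →₀ ℕ) (j : σ) :
    k - Finsupp.single j (k j) = k.erase j := by
  ext i
  rcases eq_or_ne i j with rfl | hij
  · simp [Finsupp.tsub_apply]
  · simp [Finsupp.tsub_apply, Finsupp.single_apply, Ne.symm hij, Finsupp.erase_ne hij]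

theorem coeff_prod_shift {σ K : Type*} [CommRing K] [DecidableEq σ] (a : σ → K) (n : σ → ℕ)
    (s : Finset σ) (k : σ →₀ ℕ) :
    MvPolynomial.coeff k (∏ i ∈ s, ((X i + C (a i) : MvPolynomial σ K)) ^ (n i)) =
      if k.support ⊆ s then ∏ i ∈ s, ((n i).choose (k i) : K) * a i ^ (n i - k i) else 0 := by
  classical
  induction s using Finset.induction generalizing k with
  | empty =>
      simp only [Finset.prod_empty, MvPolynomial.coeff_one, Finset.subset_empty,
        Finsupp.support_eq_empty]
      by_cases hk : k = 0 <;> simp [hk, eq_comm]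
  | @insert j s hj ih =>
      rw [Finset.prod_insert hj, shift_pow, Finset.sum_mul, MvPolynomial.coeff_sum]
      simp only [MvPolynomial.coeff_monomial_mul']
      rw [Finset.sum_eq_single (k j)]
      · rw [if_pos (Finsupp.single_le_iff.mpr le_rfl), sub_single_eq_erase, ih]
        rw [Finset.prod_insert hj]
        have hsupp : (Finsupp.erase j k).support ⊆ s ↔ k.support ⊆ insert j s := by
          rw [Finsupp.support_erase, ← Finset.subset_insert_iff]
        have hprod : (∏ i ∈ s, ((n i).choose ((Finsupp.erase j k) i) : K) *
            a i ^ (n i - (Finsupp.erase j k) i)) =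
            ∏ i ∈ s, ((n i).choose (k i) : K) * a i ^ (n i - k i) := by
          apply Finset.prod_congr rfl
          intro i hi
          rw [Finsupp.erase_ne (by rintro rfl; exact hj hi)]
        split_ifs with h1 h2 h2
        · rw [hprod]
        · exact absurd (hsupp.mp h1) h2
        · exact absurd (hsupp.mpr h2) h1
        · rw [mul_zero]
      · intro r hr hne
        rcases lt_or_gt_of_ne hne with hlt | hgt
        · -- r < k j : inner coeff vanishes since j in support of k - single j r
          rw [if_pos (Finsupp.single_le_iff.mpr hlt.le), ih, if_neg, mul_zero]
          intro hsub
          have : j ∈ (k - Finsupp.single j r).support := by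
            rw [Finsupp.mem_support_iff, Finsupp.tsub_apply, Finsupp.single_eq_same]
            omega
          exact hj (hsub this)
        · rw [if_neg (by rw [Finsupp.single_le_iff]; omega)]
      · intro hmem
        rw [Finset.mem_range, not_lt] at hmem
        rw [if_pos (Finsupp.single_le_iff.mpr le_rfl),
          Nat.choose_eq_zero_of_lt (by omega), Nat.cast_zero, zero_mul, zero_mul]

theorem mvHasseDeriv_zero' {σ K : Type*} [CommRing K] [DecidableEq σ] (F : MvPolynomial σ K) :
    mvHasseDeriv 0 F = F := by
  ext e
  simp [mvHasseDeriv_coeff]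

theorem eval_mvHasseDeriv {σ K : Type*} [CommRing K] [DecidableEq σ] (a : σ → K)
    (k : σ →₀ ℕ) (F : MvPolynomial σ K) :
    MvPolynomial.eval a (mvHasseDeriv k F) =
      MvPolynomial.coeff k (MvPolynomial.aeval (fun i => X i + C (a i)) F) := by
  induction F using MvPolynomial.induction_on' with
  | add p q ihp ihq =>
      rw [mvHasseDeriv_add, map_add, map_add, MvPolynomial.coeff_add, ihp, ihq]
  | monomial d c =>
      rw [mvHasseDeriv_monomial, MvPolynomial.eval_monomial, MvPolynomial.aeval_monomial]
      rw [MvPolynomial.algebraMap_eq, MvPolynomial.coeff_C_mul]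
      have : (d.prod fun i n => ((X i + C (a i) : MvPolynomial σ K)) ^ n) =
          ∏ i ∈ d.support, ((X i + C (a i) : MvPolynomial σ K)) ^ (d i) := rfl
      rw [this, coeff_prod_shift]
      by_cases hks : k.support ⊆ d.support
      · rw [if_pos hks, Finset.prod_mul_distrib]
        have h1 : ((∏ i ∈ k.support, Nat.choose (d i) (k i) : ℕ) : K) =
            ∏ i ∈ d.support, ((d i).choose (k i) : K) := by
          push_cast
          apply Finset.prod_subset hks
          intro i _ hik
          rw [Finsupp.notMem_support_iff.mp hik, Nat.choose_zero_right, Nat.cast_one]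
        have h2 : ((d - k).prod fun i n => a i ^ n) = ∏ i ∈ d.support, a i ^ (d i - k i) := by
          rw [Finsupp.prod]
          apply Finset.prod_subset Finsupp.support_tsub
          intro i _ hik
          rw [Finsupp.notMem_support_iff.mp hik, pow_zero]
        rw [h1, h2]
        ring
      · rw [if_neg hks, mul_zero]
        obtain ⟨i, hik, hid⟩ := Finset.not_subset.mp hks
        have : Nat.choose (d i) (k i) = 0 := by
          rw [Finsupp.notMem_support_iff.mp hid]
          exact Nat.choose_eq_zero_of_lt (Nat.pos_of_ne_zero (Finsupp.mem_support_iff.mp hik))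
        rw [Finset.prod_eq_zero hik this, Nat.cast_zero, zero_mul, zero_mul]

theorem lowdeg_mul {σ K : Type*} [CommRing K] [DecidableEq σ] (P Q : MvPolynomial σ K) (p q : ℕ)
    (hP : ∀ u : σ →₀ ℕ, (u.sum fun _ n => n) < p → P.coeff u = 0)
    (hQ : ∀ v : σ →₀ ℕ, (v.sum fun _ n => n) < q → Q.coeff v = 0)
    (w : σ →₀ ℕ) (hw : (w.sum fun _ n => n) < p + q) : (P * Q).coeff w = 0 := by
  rw [MvPolynomial.coeff_mul]
  apply Finset.sum_eq_zero
  intro x hx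
  rw [Finset.HasAntidiagonal.mem_antidiagonal] at hx
  have hsum : (x.1.sum fun _ n => n) + (x.2.sum fun _ n => n) = w.sum fun _ n => n := by
    rw [← hx, Finsupp.sum_add_index' (fun _ => rfl) (fun _ _ _ => rfl)]
  rcases lt_or_ge (x.1.sum fun _ n => n) p with h1 | h1
  · rw [hP _ h1, zero_mul]
  · rw [hQ _ (by omega), mul_zero]

theorem lowdeg_pow {σ K : Type*} [CommRing K] [DecidableEq σ] (P : MvPolynomial σ K)
    (hP : P.coeff 0 = 0) (t : ℕ) :
    ∀ w : σ →₀ ℕ, (w.sum fun _ n => n) < t → (P ^ t).coeff w = 0 := by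
  induction t with
  | zero => intro w hw; omega
  | succ t ih =>
      intro w hw
      rw [pow_succ]
      apply lowdeg_mul _ _ t 1 ih _ w (by omega)
      intro v hv
      have hv0 : v = 0 := by
        ext i
        by_contra hi
        have : i ∈ v.support := Finsupp.mem_support_iff.mpr hi
        have : 1 ≤ v.sum fun _ n => n :=
          Finset.single_le_sum (f := fun i => v i) (fun _ _ => Nat.zero_le _) this |>.trans'
            (Nat.one_le_iff_ne_zero.mpr hi)
        omega
      rw [hv0]
      exact hP

theorem lowdeg_prod {σ τ K : Type*} [CommRing K] [DecidableEq σ] [DecidableEq τ] (R : τ → MvPolynomial σ K)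
    (s : Finset τ) (d : τ → ℕ) (hR : ∀ i ∈ s, (R i).coeff 0 = 0) :
    ∀ w : σ →₀ ℕ, (w.sum fun _ n => n) < ∑ i ∈ s, d i → (∏ i ∈ s, R i ^ d i).coeff w = 0 := by
  induction s using Finset.induction with
  | empty => intro w hw; simp at hw
  | @insert j s hj ih =>
      intro w hw
      rw [Finset.prod_insert hj]
      rw [Finset.sum_insert hj] at hw
      exact lowdeg_mul _ _ (d j) (∑ i ∈ s, d i)
        (lowdeg_pow _ (hR j (Finset.mem_insert_self j s)) (d j))
        (ih fun i hi => hR i (Finset.mem_insert_of_mem hi)) w hw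

theorem multGE_comp' {m l : ℕ} {K : Type*} [Field K]
    (F : MvPolynomial (Fin m) K) (Q : Fin m → MvPolynomial (Fin l) K)
    (a : Fin l → K) (M : ℕ)
    (h : ∀ k : Fin m →₀ ℕ, (k.sum fun _ n => n) < M →
      MvPolynomial.eval (fun i => MvPolynomial.eval a (Q i)) (mvHasseDeriv k F) = 0) :
    ∀ k : Fin l →₀ ℕ, (k.sum fun _ n => n) < M →
      MvPolynomial.eval a (mvHasseDeriv k (MvPolynomial.aeval Q F)) = 0 := by
  intro k hk
  rw [eval_mvHasseDeriv, MvPolynomial.comp_aeval_apply]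
  set b : Fin m → K := fun i => MvPolynomial.eval a (Q i) with hb
  set R : Fin m → MvPolynomial (Fin l) K :=
    fun i => MvPolynomial.aeval (fun i' => (X i' + C (a i') : MvPolynomial (Fin l) K)) (Q i)
    with hRdef
  have hR0 : ∀ i, (R i - C (b i)).coeff 0 = 0 := by
    intro i
    have h1 : (R i).coeff 0 = b i := by
      rw [hRdef, ← eval_mvHasseDeriv a 0 (Q i), mvHasseDeriv_zero', hb]
    rw [MvPolynomial.coeff_sub, h1, MvPolynomial.coeff_C, if_pos rfl, sub_self]
  have hcomp : (MvPolynomial.aeval R : MvPolynomial (Fin m) K →ₐ[K] MvPolynomial (Fin l) K) F =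
      MvPolynomial.aeval (fun i => R i - C (b i))
        (MvPolynomial.aeval (fun i => (X i + C (b i) : MvPolynomial (Fin m) K)) F) := by
    rw [MvPolynomial.comp_aeval_apply]
    have heq : (fun i => (MvPolynomial.aeval fun i => R i - C (b i))
        ((X i + C (b i) : MvPolynomial (Fin m) K))) = R := by
      funext i
      rw [map_add, MvPolynomial.aeval_X, MvPolynomial.aeval_C, MvPolynomial.algebraMap_eq,
        sub_add_cancel]
    rw [heq]
  rw [hcomp]
  set H := MvPolynomial.aeval (fun i => (X i + C (b i) : MvPolynomial (Fin m) K)) F with hH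
  have hHc : ∀ d : Fin m →₀ ℕ, (d.sum fun _ n => n) < M → H.coeff d = 0 := by
    intro d hd
    rw [hH, ← eval_mvHasseDeriv]
    exact h d hd
  rw [MvPolynomial.aeval_def, MvPolynomial.eval₂_eq, MvPolynomial.coeff_sum]
  apply Finset.sum_eq_zero
  intro d _
  rw [MvPolynomial.algebraMap_eq, MvPolynomial.coeff_C_mul]
  rcases lt_or_ge (d.sum fun _ n => n) M with hdM | hdM
  · rw [hHc d hdM, zero_mul]
  · rw [lowdeg_prod (fun i => R i - C (b i)) d.support (fun i => d i)
      (fun i _ => hR0 i) k (by exact lt_of_lt_of_le hk hdM), mul_zero]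


/-- for `F ∈ F[X_1,…,X_m]`, an `m`-tuple `Q = (Q_1,…,Q_m)` of
polynomials in `l` variables and any `a ∈ F^l`, the multiplicity of the composition
satisfies `mult(F ∘ Q, a) ≥ mult(F, Q(a))`. -/
theorem multGE_comp {m l : ℕ} {K : Type*} [Field K]
    (F : MvPolynomial (Fin m) K) (Q : Fin m → MvPolynomial (Fin l) K)
    (a : Fin l → K) (M : ℕ)
    (h : multGE F (fun i => MvPolynomial.eval a (Q i)) M) :
    multGE (MvPolynomial.aeval Q F) a M := by
  exact fun k hk => multGE_comp' F Q a M h k hk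
end

section
/- (Schwartz–Zippel with multiplicities, total degree version) Let F be a nonzero polynomial of total degree u in F[X_1,...,X_m] and S ⊆ F finite. Then the number of zeros of F of multiplicity at least r in S^m is at most (u/r)|S|^{m−1}. -/
open MvPolynomial

open Finset Classical

namespace SZmult

variable {K : Type*} [Field K]

/-- Taylor shift of a multivariate polynomial: `X i ↦ X i + a i`. -/
noncomputable def shy {n : ℕ} (a : Fin n → K) :
    MvPolynomial (Fin n) K →ₐ[K] MvPolynomial (Fin n) K :=
  aeval (fun i => X i + C (a i))

lemma shy_shy {n : ℕ} (a : Fin n → K) (p : MvPolynomial (Fin n) K) :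
    shy (-a) (shy a p) = p := by
  have h : (shy (-a)).comp (shy a) = AlgHom.id K (MvPolynomial (Fin n) K) := by
    apply MvPolynomial.algHom_ext
    intro i
    simp [shy, algebraMap_eq]
  calc shy (-a) (shy a p) = ((shy (-a)).comp (shy a)) p := rfl
    _ = p := by rw [h]; rfl

lemma shy_injective {n : ℕ} (a : Fin n → K) : Function.Injective (shy a) := by
  intro p q h
  have := congrArg (shy (-a)) h
  rwa [shy_shy, shy_shy] at this

lemma shy_ne_zero {n : ℕ} (a : Fin n → K) {p : MvPolynomial (Fin n) K} (hp : p ≠ 0) :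
    shy a p ≠ 0 := by
  intro h
  exact hp (by simpa using shy_injective a (h.trans (map_zero (shy a)).symm))

/-- minimal total degree of a monomial occurring in `G` (junk `0` for `G = 0`). -/
noncomputable def ordd {n : ℕ} (G : MvPolynomial (Fin n) K) : ℕ :=
  sInf ((fun d : Fin n →₀ ℕ => d.sum fun _ e => e) '' (G.support : Set (Fin n →₀ ℕ)))

lemma ordd_le {n : ℕ} {G : MvPolynomial (Fin n) K} {d : Fin n →₀ ℕ} (h : d ∈ G.support) :
    ordd G ≤ d.sum fun _ e => e :=
  Nat.sInf_le ⟨d, by simpa using h, rfl⟩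

lemma exists_ordd {n : ℕ} {G : MvPolynomial (Fin n) K} (hG : G ≠ 0) :
    ∃ d ∈ G.support, ordd G = (d.sum fun _ e => e) := by
  have hne : ((fun d : Fin n →₀ ℕ => d.sum fun _ e => e) ''
      (G.support : Set (Fin n →₀ ℕ))).Nonempty := by
    obtain ⟨d, hd⟩ := MvPolynomial.support_nonempty.mpr hG
    exact ⟨_, ⟨d, by simpa using hd, rfl⟩⟩
  obtain ⟨d, hd, hval⟩ := Nat.sInf_mem hne
  exact ⟨d, by simpa using hd, hval.symm⟩

lemma le_ordd {n : ℕ} {G : MvPolynomial (Fin n) K} {r : ℕ} (hG : G ≠ 0)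
    (h : ∀ d ∈ G.support, r ≤ (d.sum fun _ e => e)) : r ≤ ordd G := by
  obtain ⟨d, hd, hval⟩ := exists_ordd hG
  exact hval ▸ h d hd

lemma ordd_fin0 {G : MvPolynomial (Fin 0) K} : ordd G = 0 := by
  have hd : ∀ d : Fin 0 →₀ ℕ, (d.sum fun _ e => e) = 0 := by
    intro d
    rw [Subsingleton.elim d 0]
    simp
  rcases eq_or_ne G 0 with h | h
  · rw [ordd, h]
    simp [ordd]
  · obtain ⟨d, hd', _⟩ := exists_ordd h
    exact Nat.le_antisymm (le_of_le_of_eq (ordd_le hd') (hd d)) (Nat.zero_le _)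

lemma coeff_prod_aux {n : ℕ} (a : Fin n → K) (d : Fin n →₀ ℕ) (s : Finset (Fin n))
    (k : Fin n →₀ ℕ) :
    MvPolynomial.coeff k (∏ i ∈ s, (X i + C (a i)) ^ d i) =
      if k.support ⊆ s then
        ∏ i ∈ s, (((d i).choose (k i) : K) * a i ^ (d i - k i)) else 0 := by
  classical
  induction s using Finset.induction generalizing k with
  | empty =>
    simp only [Finset.prod_empty]
    rw [MvPolynomial.coeff_one]
    by_cases hk : k = 0
    · subst hk; simp
    · rw [if_neg (fun h => hk h.symm), if_neg]
      intro hsub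
      exact hk (Finsupp.support_eq_empty.mp (Finset.subset_empty.mp hsub))
  | @insert j s hj ih =>
    have hrw : ∀ e : ℕ, X j ^ e * C (a j) ^ (d j - e) *
        ((d j).choose e : MvPolynomial (Fin n) K) =
        monomial (Finsupp.single j e) ((a j) ^ (d j - e) * ((d j).choose e : K)) := by
      intro e
      have hN : ((d j).choose e : MvPolynomial (Fin n) K) = C ((d j).choose e : K) :=
        (map_natCast (C : K →+* MvPolynomial (Fin n) K) _).symm
      rw [hN, X_pow_eq_monomial, ← C_pow, C_apply, C_apply, monomial_mul, monomial_mul]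
      simp
    rw [Finset.prod_insert hj, add_pow, Finset.sum_mul, MvPolynomial.coeff_sum]
    simp_rw [hrw, coeff_monomial_mul', ih]
    have hsub_iff : (k - Finsupp.single j (k j)).support ⊆ s ↔ k.support ⊆ insert j s := by
      constructor
      · intro h i hik
        by_cases hij : i = j
        · subst hij; exact Finset.mem_insert_self i s
        · refine Finset.mem_insert_of_mem (h ?_)
          rw [Finsupp.mem_support_iff, Finsupp.tsub_apply, Finsupp.single_eq_of_ne
            hij, Nat.sub_zero]
          exact Finsupp.mem_support_iff.mp hik
      · intro h i hik
        rw [Finsupp.mem_support_iff, Finsupp.tsub_apply] at hik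
        by_cases hij : i = j
        · subst hij; simp at hik
        · rw [Finsupp.single_eq_of_ne hij, Nat.sub_zero] at hik
          have := h (Finsupp.mem_support_iff.mpr hik)
          rcases Finset.mem_insert.mp this with h1 | h1
          · exact absurd h1 hij
          · exact h1
    rw [Finset.sum_eq_single (k j)]
    · rw [if_pos (Finsupp.single_le_iff.mpr le_rfl)]
      have hprod : ∏ i ∈ s, (((d i).choose ((k - Finsupp.single j (k j)) i) : K) *
          a i ^ (d i - (k - Finsupp.single j (k j)) i)) =
          ∏ i ∈ s, (((d i).choose (k i) : K) * a i ^ (d i - k i)) := by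
        refine Finset.prod_congr rfl fun i hi => ?_
        have hij : i ≠ j := fun hh => hj (hh ▸ hi)
        rw [Finsupp.tsub_apply, Finsupp.single_eq_of_ne hij, Nat.sub_zero]
      by_cases hsub : k.support ⊆ insert j s
      · rw [if_pos (hsub_iff.mpr hsub), if_pos hsub, Finset.prod_insert hj, hprod]
        ring
      · rw [if_neg (fun h => hsub (hsub_iff.mp h)), if_neg hsub, mul_zero]
    · intro e _ hne
      rcases lt_or_gt_of_ne hne with hlt | hgt
      · rw [if_pos (Finsupp.single_le_iff.mpr hlt.le), if_neg, mul_zero]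
        intro hsubs
        refine hj (hsubs ?_)
        rw [Finsupp.mem_support_iff, Finsupp.tsub_apply, Finsupp.single_eq_same]
        omega
      · rw [if_neg]
        rw [Finsupp.single_le_iff]
        omega
    · intro hmem
      have : d j < k j := by
        have := Finset.mem_range.not.mp hmem
        omega
      rw [Nat.choose_eq_zero_of_lt this]
      simp

lemma coeff_shy {n : ℕ} (a : Fin n → K) (F : MvPolynomial (Fin n) K) (k : Fin n →₀ ℕ) :
    MvPolynomial.coeff k (shy a F) = MvPolynomial.eval a (mvHasseDeriv k F) := by
  classical
  conv_lhs => rw [← support_sum_monomial_coeff F]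
  rw [map_sum, mvHasseDeriv, map_sum]
  rw [MvPolynomial.coeff_sum]
  refine Finset.sum_congr rfl fun d _ => ?_
  rw [shy, aeval_monomial, algebraMap_eq,
    Finsupp.prod_fintype _ _ (fun i => pow_zero _), eval_monomial,
    Finsupp.prod_fintype _ _ (fun i => pow_zero _)]
  rw [MvPolynomial.coeff_C_mul, coeff_prod_aux, if_pos (Finset.subset_univ _)]
  rw [Finset.prod_mul_distrib, nsmul_eq_mul]
  have hchoose : ((∏ i ∈ k.support, (d i).choose (k i) : ℕ) : K) =
      ∏ i : Fin n, ((d i).choose (k i) : K) := by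
    rw [Nat.cast_prod]
    refine Finset.prod_subset (Finset.subset_univ _) fun i _ hik => ?_
    rw [Finsupp.notMem_support_iff.mp hik, Nat.choose_zero_right, Nat.cast_one]
  have hpow : ∏ i : Fin n, a i ^ ((d - k) i) = ∏ i : Fin n, a i ^ (d i - k i) := by
    refine Finset.prod_congr rfl fun i _ => ?_
    rw [Finsupp.tsub_apply]
  rw [hpow, hchoose]
  ring

/-- Apply `MvPolynomial.coeff c` to each coefficient of a polynomial over `MvPolynomial`. -/
noncomputable def lamc {n : ℕ} (c : Fin n →₀ ℕ)
    (p : Polynomial (MvPolynomial (Fin n) K)) : Polynomial K :=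
  ⟨⟨p.toFinsupp.coeff.mapRange (MvPolynomial.coeff c) (by simp)⟩⟩

lemma lamc_coeff {n : ℕ} (c : Fin n →₀ ℕ) (p : Polynomial (MvPolynomial (Fin n) K)) (j : ℕ) :
    (lamc c p).coeff j = MvPolynomial.coeff c (p.coeff j) := by
  rcases p with ⟨pf⟩
  simp [lamc, Polynomial.coeff]
  rfl

lemma lamc_natDegree_le {n : ℕ} (c : Fin n →₀ ℕ) (p : Polynomial (MvPolynomial (Fin n) K)) :
    (lamc c p).natDegree ≤ p.natDegree := by
  refine Polynomial.natDegree_le_iff_coeff_eq_zero.mpr fun N hN => ?_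
  rw [lamc_coeff, Polynomial.coeff_eq_zero_of_natDegree_lt hN]
  simp

lemma lamc_hasseDeriv {n : ℕ} (c : Fin n →₀ ℕ) (p : Polynomial (MvPolynomial (Fin n) K))
    (j : ℕ) : lamc c (Polynomial.hasseDeriv j p) = Polynomial.hasseDeriv j (lamc c p) := by
  ext N
  rw [lamc_coeff, Polynomial.hasseDeriv_coeff, Polynomial.hasseDeriv_coeff, lamc_coeff]
  push_cast
  rw [← map_natCast (MvPolynomial.C : K →+* MvPolynomial (Fin n) K), MvPolynomial.coeff_C_mul]

lemma lamc_eval_C {n : ℕ} (c : Fin n →₀ ℕ) (b : K)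
    (p : Polynomial (MvPolynomial (Fin n) K)) :
    MvPolynomial.coeff c (Polynomial.eval (MvPolynomial.C b) p) =
      Polynomial.eval b (lamc c p) := by
  rw [Polynomial.eval_eq_sum_range' (Nat.lt_succ_of_le (le_refl p.natDegree)),
    Polynomial.eval_eq_sum_range' (Nat.lt_succ_of_le (lamc_natDegree_le c p))]
  rw [MvPolynomial.coeff_sum]
  refine Finset.sum_congr rfl fun e _ => ?_
  rw [lamc_coeff, ← MvPolynomial.C_pow, mul_comm, MvPolynomial.coeff_C_mul, mul_comm]

lemma lamc_taylor {n : ℕ} (c : Fin n →₀ ℕ) (b : K)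
    (p : Polynomial (MvPolynomial (Fin n) K)) :
    lamc c (Polynomial.taylor (MvPolynomial.C b) p) = Polynomial.taylor b (lamc c p) := by
  ext j
  rw [lamc_coeff, Polynomial.taylor_coeff, Polynomial.taylor_coeff, lamc_eval_C,
    lamc_hasseDeriv]

lemma finSuccEquiv_shy {n : ℕ} (b : K) (a : Fin n → K) (F : MvPolynomial (Fin (n + 1)) K) :
    finSuccEquiv K n (shy (Fin.cons b a) F) =
      Polynomial.taylor (MvPolynomial.C b)
        (Polynomial.map ((shy a) : MvPolynomial (Fin n) K →+* MvPolynomial (Fin n) K)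
          (finSuccEquiv K n F)) := by
  induction F using MvPolynomial.induction_on with
  | C r =>
    have h1 : shy (Fin.cons b a) (C r : MvPolynomial (Fin (n + 1)) K) = C r := by
      simp [shy, algebraMap_eq]
    rw [h1]
    simp [finSuccEquiv_apply, shy, algebraMap_eq, Polynomial.taylor_C]
  | add p q hp hq =>
    rw [map_add, map_add, map_add, Polynomial.map_add, map_add, hp, hq]
  | mul_X p i hp =>
    rw [map_mul, map_mul, map_mul, Polynomial.map_mul, Polynomial.taylor_mul, hp]
    apply congrArg (HMul.hMul _)
    refine Fin.cases ?_ ?_ i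
    · have h1 : shy (Fin.cons b a) (X 0 : MvPolynomial (Fin (n + 1)) K) = X 0 + C b := by
        simp [shy, algebraMap_eq]
      rw [h1, map_add]
      simp [finSuccEquiv_apply, Polynomial.taylor_X]
    · intro j
      have h1 : shy (Fin.cons b a) (X j.succ : MvPolynomial (Fin (n + 1)) K) =
          X j.succ + C (a j) := by
        simp [shy, algebraMap_eq]
      rw [h1, map_add]
      have h3 : shy a (X j : MvPolynomial (Fin n) K) = X j + C (a j) := by
        simp [shy, algebraMap_eq]
      simp [finSuccEquiv_apply, Polynomial.taylor_C, h3]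

lemma sum_count_le [DecidableEq K] (S : Finset K) (M : Multiset K) :
    ∑ b ∈ S, M.count b ≤ Multiset.card M := by
  have h1 : ∑ b ∈ S, M.count b = ∑ b ∈ S ∩ M.toFinset, M.count b := by
    refine (Finset.sum_subset Finset.inter_subset_left fun x hx hx' => ?_).symm
    have hxm : x ∉ M.toFinset := fun hm => hx' (Finset.mem_inter.mpr ⟨hx, hm⟩)
    simpa [Multiset.count_eq_zero] using hxm
  rw [h1]
  calc ∑ b ∈ S ∩ M.toFinset, M.count b ≤ ∑ b ∈ M.toFinset, M.count b :=
        Finset.sum_le_sum_of_subset Finset.inter_subset_right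
    _ = Multiset.card M := Multiset.toFinset_sum_count_eq M

lemma sum_rootMultiplicity_le [DecidableEq K] {q : Polynomial K} (hq : q ≠ 0) (S : Finset K) :
    ∑ b ∈ S, q.rootMultiplicity b ≤ q.natDegree := by
  have h : ∀ b ∈ S, q.rootMultiplicity b = q.roots.count b := fun b _ =>
    (Polynomial.count_roots q).symm
  rw [Finset.sum_congr rfl h]
  exact (sum_count_le S q.roots).trans q.card_roots'

lemma key_line {n : ℕ} (S : Finset K) (F : MvPolynomial (Fin (n + 1)) K) (hF : F ≠ 0)
    (a : Fin n → K) :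
    ∑ b ∈ S, ordd (shy (Fin.cons b a) F) ≤
      S.card * ordd (shy a (finSuccEquiv K n F).leadingCoeff) +
        (finSuccEquiv K n F).natDegree := by
  classical
  set f := finSuccEquiv K n F with hfdef
  have hf : f ≠ 0 := by
    intro h0
    apply hF
    have := congrArg (finSuccEquiv K n).symm h0
    simpa [hfdef] using this
  have hinj : Function.Injective ((shy a) : MvPolynomial (Fin n) K →+* MvPolynomial (Fin n) K) :=
    shy_injective a
  set h := f.map ((shy a) : MvPolynomial (Fin n) K →+* MvPolynomial (Fin n) K) with hhdef
  have hh : h ≠ 0 := by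
    intro h0
    exact hf (Polynomial.map_injective _ hinj (by simpa using h0))
  have hlcf : f.leadingCoeff ≠ 0 := Polynomial.leadingCoeff_ne_zero.mpr hf
  have hlc : h.leadingCoeff = shy a f.leadingCoeff := Polynomial.leadingCoeff_map_of_injective hinj f
  have hdeg : h.natDegree = f.natDegree := Polynomial.natDegree_map_eq_of_injective hinj f
  have hlcne : shy a f.leadingCoeff ≠ 0 := shy_ne_zero a hlcf
  obtain ⟨c, hcmem, hcval⟩ := exists_ordd hlcne
  set q := lamc c h with hqdef
  have hq0 : q ≠ 0 := by
    intro h0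
    have : q.coeff h.natDegree = 0 := by rw [h0]; simp
    rw [lamc_coeff, Polynomial.coeff_natDegree, hlc] at this
    exact (MvPolynomial.mem_support_iff.mp hcmem) this
  have hqdeg : q.natDegree ≤ f.natDegree := (lamc_natDegree_le c h).trans (le_of_eq hdeg)
  have hb : ∀ b ∈ S, ordd (shy (Fin.cons b a) F) ≤
      (c.sum fun _ e => e) + q.rootMultiplicity b := by
    intro b _
    set τ := Polynomial.taylor b q with hτdef
    have hτ : τ ≠ 0 := by
      intro h0
      exact hq0 (Polynomial.taylor_injective b (h0.trans (map_zero _).symm))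
    set k := τ.natTrailingDegree with hkdef
    have hck : τ.coeff k ≠ 0 := fun hc =>
      (Polynomial.trailingCoeff_nonzero_iff_nonzero.mpr hτ) hc
    have hdvd : (Polynomial.X - Polynomial.C b) ^ k ∣ q := by
      have hX : Polynomial.X ^ k ∣ τ := Polynomial.X_pow_dvd_iff.mpr fun d hd =>
        Polynomial.coeff_eq_zero_of_lt_natTrailingDegree hd
      obtain ⟨s0, hs0⟩ := hX
      have hqτ : q = Polynomial.taylor (-b) τ := by
        rw [hτdef, Polynomial.taylor_taylor, neg_add_cancel, Polynomial.taylor_zero]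
      rw [hqτ, hs0, Polynomial.taylor_apply, Polynomial.mul_comp, Polynomial.pow_comp,
        Polynomial.X_comp, Polynomial.C_neg, ← sub_eq_add_neg]
      exact dvd_mul_right _ _
    have hkle : k ≤ q.rootMultiplicity b := (Polynomial.le_rootMultiplicity_iff hq0).mpr hdvd
    have hmem : Finsupp.cons k c ∈ (shy (Fin.cons b a) F).support := by
      rw [MvPolynomial.mem_support_iff]
      have hcc : MvPolynomial.coeff (Finsupp.cons k c) (shy (Fin.cons b a) F) = τ.coeff k := by
        rw [← finSuccEquiv_coeff_coeff, finSuccEquiv_shy, ← lamc_coeff, lamc_taylor]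
      rw [hcc]
      exact hck
    have h1 : ordd (shy (Fin.cons b a) F) ≤ k + (c.sum fun _ e => e) := by
      have := ordd_le hmem
      rwa [Finsupp.sum_cons] at this
    omega
  calc ∑ b ∈ S, ordd (shy (Fin.cons b a) F)
      ≤ ∑ b ∈ S, ((c.sum fun _ e => e) + q.rootMultiplicity b) := Finset.sum_le_sum hb
    _ = S.card * (c.sum fun _ e => e) + ∑ b ∈ S, q.rootMultiplicity b := by
        rw [Finset.sum_add_distrib, Finset.sum_const, smul_eq_mul]
    _ ≤ S.card * ordd (shy a f.leadingCoeff) + f.natDegree := by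
        have := (sum_rootMultiplicity_le hq0 S).trans hqdeg
        rw [hcval]
        omega

lemma sum_piFinset_succ {n : ℕ} (S : Finset K) (g : (Fin (n + 1) → K) → ℕ) :
    ∑ x ∈ Fintype.piFinset (fun _ : Fin (n + 1) => S), g x =
      ∑ a ∈ Fintype.piFinset (fun _ : Fin n => S), ∑ b ∈ S, g (Fin.cons b a) := by
  classical
  have h2 : ∑ p ∈ (Fintype.piFinset fun _ : Fin n => S) ×ˢ S, g (Fin.cons p.2 p.1) =
      ∑ a ∈ Fintype.piFinset (fun _ : Fin n => S), ∑ b ∈ S, g (Fin.cons b a) := by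
    rw [Finset.sum_product]
  rw [← h2]
  refine Finset.sum_nbij' (fun x => (Fin.tail x, x 0)) (fun p => Fin.cons p.2 p.1)
    ?_ ?_ ?_ ?_ ?_
  · intro x hx
    rw [Fintype.mem_piFinset] at hx
    refine Finset.mem_product.mpr ⟨?_, hx 0⟩
    rw [Fintype.mem_piFinset]
    exact fun i => hx i.succ
  · intro p hp
    rw [Finset.mem_product, Fintype.mem_piFinset] at hp
    rw [Fintype.mem_piFinset]
    intro i
    refine Fin.cases ?_ ?_ i
    · simpa using hp.2
    · intro j
      simpa using hp.1 j
  · intro x _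
    simp [Fin.cons_self_tail]
  · intro p _
    simp [Fin.tail_cons]
  · intro x _
    rw [Fin.cons_self_tail]

lemma main_sum {n : ℕ} (S : Finset K) (F : MvPolynomial (Fin n) K) (hF : F ≠ 0) :
    (∑ x ∈ Fintype.piFinset (fun _ : Fin n => S), ordd (shy x F)) * S.card ≤
      F.totalDegree * S.card ^ n := by
  induction n with
  | zero =>
    have h0 : ∀ x ∈ Fintype.piFinset (fun _ : Fin 0 => S), ordd (shy x F) = 0 :=
      fun x _ => ordd_fin0
    rw [Finset.sum_congr rfl h0]
    simp
  | succ n ih =>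
    set f := finSuccEquiv K n F with hfdef
    have hf : f ≠ 0 := by
      intro h0
      apply hF
      have := congrArg (finSuccEquiv K n).symm h0
      simpa [hfdef] using this
    have hlc : f.leadingCoeff ≠ 0 := Polynomial.leadingCoeff_ne_zero.mpr hf
    have hcard : (Fintype.piFinset (fun _ : Fin n => S)).card = S.card ^ n := by
      simp [Fintype.card_piFinset]
    rw [sum_piFinset_succ]
    have h1 : ∑ a ∈ Fintype.piFinset (fun _ : Fin n => S),
          ∑ b ∈ S, ordd (shy (Fin.cons b a) F) ≤
        ∑ a ∈ Fintype.piFinset (fun _ : Fin n => S),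
          (S.card * ordd (shy a f.leadingCoeff) + f.natDegree) :=
      Finset.sum_le_sum fun a _ => key_line S F hF a
    have h2 : ∑ a ∈ Fintype.piFinset (fun _ : Fin n => S),
          (S.card * ordd (shy a f.leadingCoeff) + f.natDegree) =
        S.card * (∑ a ∈ Fintype.piFinset (fun _ : Fin n => S), ordd (shy a f.leadingCoeff)) +
          S.card ^ n * f.natDegree := by
      rw [Finset.sum_add_distrib, Finset.sum_const, smul_eq_mul, hcard, ← Finset.mul_sum]
    have h3 := ih f.leadingCoeff hlc
    have htd : f.leadingCoeff.totalDegree + f.natDegree ≤ F.totalDegree := by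
      refine totalDegree_coeff_finSuccEquiv_add_le F f.natDegree ?_
      rw [← hfdef, Polynomial.coeff_natDegree]
      exact hlc
    set s := S.card
    set A := ∑ a ∈ Fintype.piFinset (fun _ : Fin n => S), ordd (shy a f.leadingCoeff)
    set B := ∑ a ∈ Fintype.piFinset (fun _ : Fin n => S), ∑ b ∈ S, ordd (shy (Fin.cons b a) F)
    set D := f.leadingCoeff.totalDegree
    set t := f.natDegree
    have hB : B ≤ s * A + s ^ n * t := le_of_le_of_eq h1 h2
    calc B * s ≤ (s * A + s ^ n * t) * s := Nat.mul_le_mul_right s hB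
      _ = s * (A * s) + t * (s ^ n * s) := by ring
      _ ≤ s * (D * s ^ n) + t * (s ^ n * s) := by
          have := Nat.mul_le_mul_left s h3
          omega
      _ = (D + t) * (s ^ n * s) := by ring
      _ ≤ F.totalDegree * (s ^ n * s) := Nat.mul_le_mul_right _ htd
      _ = F.totalDegree * s ^ (n + 1) := by rw [pow_succ]

lemma mvHasseDeriv_zero {n : ℕ} (F : MvPolynomial (Fin n) K) : mvHasseDeriv 0 F = F := by
  rw [mvHasseDeriv]
  have h : ∀ d ∈ F.support, (MvPolynomial.monomial (d - 0)
      ((∏ i ∈ (0 : Fin n →₀ ℕ).support, (d i).choose ((0 : Fin n →₀ ℕ) i) : ℕ) • F.coeff d)) =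
      MvPolynomial.monomial d (F.coeff d) := by
    intro d _
    simp
  rw [Finset.sum_congr rfl h, support_sum_monomial_coeff]

end SZmult

/-- Schwartz–Zippel with multiplicities, total degree version: a nonzero
polynomial `F` of total degree `u` has at most `(u/r)|S|^{m−1}` zeros of multiplicity
at least `r` in `S^m`. -/
theorem zeros_mult_r_total_degree_bound {m : ℕ} {K : Type*} [Field K]
    (S : Finset K) (F : MvPolynomial (Fin m) K) (r u : ℕ)
    (hr : 1 ≤ r) (hF : F ≠ 0) (hu : F.totalDegree = u) :
    (((Fintype.piFinset fun _ : Fin m => S).filter (fun a => multGE F a r)).card : ℝ)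
      ≤ (u / r : ℝ) * (S.card : ℝ) ^ (m - 1) := by
  classical
  subst hu
  set T := (Fintype.piFinset fun _ : Fin m => S).filter (fun a => multGE F a r) with hT
  rcases Nat.eq_zero_or_pos m with hm | hm
  · subst hm
    have hempty : T = ∅ := by
      rw [Finset.eq_empty_iff_forall_notMem]
      intro a ha
      have hmult := (Finset.mem_filter.mp ha).2
      have h0 : MvPolynomial.eval a (mvHasseDeriv 0 F) = 0 := hmult 0 (by simpa using Nat.lt_of_lt_of_le Nat.zero_lt_one hr)
      rw [SZmult.mvHasseDeriv_zero] at h0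
      have hC := MvPolynomial.eq_C_of_isEmpty F
      rw [hC] at h0
      rw [MvPolynomial.eval_C] at h0
      exact hF (by rw [hC, h0, map_zero])
    rw [hempty]
    simp only [Finset.card_empty, Nat.cast_zero]
    positivity
  · have hord : ∀ a ∈ T, r ≤ SZmult.ordd (SZmult.shy a F) := by
      intro a ha
      have hmult := (Finset.mem_filter.mp ha).2
      refine SZmult.le_ordd (SZmult.shy_ne_zero a hF) fun d hd => ?_
      by_contra hlt
      push_neg at hlt
      have h0 := hmult d hlt
      rw [← SZmult.coeff_shy] at h0
      exact (MvPolynomial.mem_support_iff.mp hd) h0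
    have h1 : T.card * r ≤ ∑ a ∈ T, SZmult.ordd (SZmult.shy a F) := by
      have := Finset.card_nsmul_le_sum T (fun a => SZmult.ordd (SZmult.shy a F)) r hord
      simpa [smul_eq_mul] using this
    have h2 : ∑ a ∈ T, SZmult.ordd (SZmult.shy a F) ≤
        ∑ a ∈ Fintype.piFinset (fun _ : Fin m => S), SZmult.ordd (SZmult.shy a F) :=
      Finset.sum_le_sum_of_subset (Finset.filter_subset _ _)
    have hN : T.card * r * S.card ≤ F.totalDegree * S.card ^ m :=
      le_trans (Nat.mul_le_mul_right _ (h1.trans h2)) (SZmult.main_sum S F hF)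
    rcases Finset.eq_empty_or_nonempty S with hS | hS
    · have hTe : T = ∅ := by
        rw [Finset.eq_empty_iff_forall_notMem]
        intro a ha
        have := (Finset.mem_filter.mp ha).1
        rw [Fintype.mem_piFinset] at this
        have := this ⟨0, hm⟩
        simp [hS] at this
      rw [hTe]
      simp only [Finset.card_empty, Nat.cast_zero]
      positivity
    · have hs0 : 0 < S.card := Finset.card_pos.mpr hS
      have hss : (0 : ℝ) < (S.card : ℝ) := by exact_mod_cast hs0
      have hrs : (0 : ℝ) < (r : ℝ) := by exact_mod_cast lt_of_lt_of_le Nat.zero_lt_one hr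
      have hm1 : S.card ^ m = S.card ^ (m - 1) * S.card := by
        conv_lhs => rw [← Nat.succ_pred_eq_of_pos hm]
        rw [pow_succ, Nat.pred_eq_sub_one]
      rw [hm1] at hN
      have hcast : (T.card : ℝ) * r * S.card ≤
          (F.totalDegree : ℝ) * ((S.card : ℝ) ^ (m - 1) * S.card) := by
        exact_mod_cast hN
      have h5 : (T.card : ℝ) * r ≤ (F.totalDegree : ℝ) * (S.card : ℝ) ^ (m - 1) := by
        have h6 : ((F.totalDegree : ℝ) * ((S.card : ℝ) ^ (m - 1) * (S.card : ℝ))) =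
            ((F.totalDegree : ℝ) * (S.card : ℝ) ^ (m - 1)) * (S.card : ℝ) := by ring
        rw [h6] at hcast
        exact (mul_le_mul_iff_of_pos_right hss).mp hcast
      rw [div_mul_eq_mul_div, le_div_iff₀ hrs]
      exact h5
end
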